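/- arXiv:1101.2145 — 6 statements merged into one kernel-verified Lean document; each statement's English description precedes it below -/
import Mathlib

section
/- Abstract propagation estimate on a Krein space (Proposition D.1(1)). Let C(t), C1(t), C2(t), B(t), B_1(t), ..., B_N(t) be strongly continuous families of bounded operators on H for t ≥ 0, let 0 ≤ δ0 < 1 and c_1, ..., c_N ≥ 0, and assume: (a) for every u ∈ H the function f_u(t) := [P u_t, Φ(t) P u_t] is differentiable on [0,∞) with f_u'(t) = ⟨P u_t, C(t) P u_t⟩ + ⟨P u_t, C1(t) P u_t⟩ + ⟨P u_t, C2(t) P u_t⟩; (b) each C(t) is selfadjoint on the Hilbert space H and ⟨w, C(t) w⟩ ≥ ‖B(t) w‖² for all w ∈ H; (c) |⟨w, C1(t) w⟩| ≤ Σ_{1≤j,k≤N} ‖B_j(t) w‖ · ‖B_k(t) w‖ for all w ∈ H; (d) ∫_0^∞ ‖B_j(t) P u_t‖² dt ≤ c_j ‖u‖² for every u ∈ H and every j; (e) |⟨w, C2(t) w⟩| ≤ δ0 ‖B(t) w‖² for all w ∈ H. Then there is a constant C' > 0 such that ∫_0^∞ ‖B(t) P u_t‖² dt ≤ C' ‖u‖²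 for all u ∈ H. -/
open MeasureTheory Set Filter
open scoped ComplexInnerProductSpace Topology

lemma strong_apply_continuousOn {H : Type*} [NormedAddCommGroup H]
    [InnerProductSpace ℂ H] [CompleteSpace H]
    (T : ℝ → H →L[ℂ] H) (hT : ∀ u : H, ContinuousOn (fun t => T t u) (Ici 0))
    {w : ℝ → H} (hw : Continuous w) :
    ContinuousOn (fun t => T t (w t)) (Ici 0) := by
  intro t0 ht0
  set s : Set ℝ := Ici 0 ∩ Icc (t0 - 1) (t0 + 1) with hs
  have hsub : s ⊆ Ici 0 := inter_subset_left
  have hsc : IsCompact s := isCompact_Icc.inter_left isClosed_Ici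
  have hpt : ∀ v : H, ∃ Cv, ∀ i : s, ‖T i v‖ ≤ Cv := by
    intro v
    obtain ⟨Cv, hCv⟩ := hsc.exists_bound_of_continuousOn ((hT v).mono hsub)
    exact ⟨Cv, fun i => hCv i i.2⟩
  obtain ⟨C0, hC0⟩ := banach_steinhaus (g := fun i : s => T i) hpt
  set C1 := max C0 0 with hC1
  have hC1nn : 0 ≤ C1 := le_max_right _ _
  have heq : 𝓝[Ici 0] t0 = 𝓝[s] t0 := by
    rw [hs, ← nhdsWithin_restrict' (Ici 0)
      (Icc_mem_nhds (by linarith : t0 - 1 < t0) (by linarith : t0 < t0 + 1))]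
  have key : Tendsto (fun t => T t (w t)) (𝓝[s] t0) (𝓝 (T t0 (w t0))) := by
    rw [tendsto_iff_norm_sub_tendsto_zero]
    apply squeeze_zero' (Eventually.of_forall fun t => norm_nonneg _)
      (g := fun t => C1 * ‖w t - w t0‖ + ‖T t (w t0) - T t0 (w t0)‖)
    · filter_upwards [self_mem_nhdsWithin] with t ht
      have h1 : ‖T t (w t) - T t0 (w t0)‖ ≤
          ‖T t (w t) - T t (w t0)‖ + ‖T t (w t0) - T t0 (w t0)‖ :=
        norm_sub_le_norm_sub_add_norm_sub _ _ _
      have h2 : ‖T t (w t) - T t (w t0)‖ ≤ C1 * ‖w t - w t0‖ := by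
        rw [← map_sub]
        exact le_trans ((T t).le_opNorm _)
          (mul_le_mul_of_nonneg_right (le_trans (hC0 ⟨t, ht⟩) (le_max_left _ _))
            (norm_nonneg _))
      linarith
    · have hw0 : Tendsto (fun t => C1 * ‖w t - w t0‖) (𝓝[s] t0) (𝓝 (C1 * 0)) := by
        apply Tendsto.const_mul
        rw [← tendsto_iff_norm_sub_tendsto_zero]
        exact (hw.tendsto t0).mono_left nhdsWithin_le_nhds
      have hT0 : Tendsto (fun t => ‖T t (w t0) - T t0 (w t0)‖) (𝓝[s] t0) (𝓝 0) := by
        rw [← tendsto_iff_norm_sub_tendsto_zero]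
        exact ((hT (w t0)) t0 ht0).mono_left (nhdsWithin_mono _ hsub)
      simpa using hw0.add hT0
  unfold ContinuousWithinAt
  rw [heq]
  exact key

/-- **Abstract propagation estimate on a Krein space** (Proposition D.1(1)). -/
theorem abstract_propagation_estimate
    {H : Type*} [NormedAddCommGroup H] [InnerProductSpace ℂ H] [CompleteSpace H]
    (K : H →L[ℂ] H) (hK : IsSelfAdjoint K)
    (hKunit : IsUnit ((1 : H →L[ℂ] H) + K))
    (U : ℝ → H →L[ℂ] H) (hU0 : U 0 = 1)
    (hUgrp : ∀ s t : ℝ, U (s + t) = (U s).comp (U t))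
    (hUcont : ∀ u : H, Continuous fun t : ℝ => U t u)
    (hUkrein : ∀ (t : ℝ) (u v : H),
      ⟪U t u, ((1 : H →L[ℂ] H) + K) (U t v)⟫ = ⟪u, ((1 : H →L[ℂ] H) + K) v⟫)
    (P : H →L[ℂ] H) (hPU : ∀ t : ℝ, P.comp (U t) = (U t).comp P)
    (hUPbdd : ∃ Cb : ℝ, ∀ t : ℝ, 0 ≤ t → ‖(U t).comp P‖ ≤ Cb)
    (Φ : ℝ → H →L[ℂ] H)
    (hΦcont : ∀ u : H, ContinuousOn (fun t : ℝ => Φ t u) (Ici 0))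
    (hΦbdd : ∃ CΦ : ℝ, ∀ t : ℝ, 0 ≤ t → ‖Φ t‖ ≤ CΦ)
    (N : ℕ) (C C1 C2 B : ℝ → H →L[ℂ] H) (B' : Fin N → ℝ → H →L[ℂ] H)
    (hCcont : ∀ u : H, ContinuousOn (fun t : ℝ => C t u) (Ici 0))
    (hC1cont : ∀ u : H, ContinuousOn (fun t : ℝ => C1 t u) (Ici 0))
    (hC2cont : ∀ u : H, ContinuousOn (fun t : ℝ => C2 t u) (Ici 0))
    (hBcont : ∀ u : H, ContinuousOn (fun t : ℝ => B t u) (Ici 0))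
    (hB'cont : ∀ (j : Fin N) (u : H), ContinuousOn (fun t : ℝ => B' j t u) (Ici 0))
    (δ0 : ℝ) (hδ0 : 0 ≤ δ0) (hδ1 : δ0 < 1)
    (c : Fin N → ℝ) (hc : ∀ j, 0 ≤ c j)
    -- (a) the Heisenberg derivative identity
    (ha : ∀ u : H, ∀ t ∈ Ici (0:ℝ),
      HasDerivWithinAt
        (fun s : ℝ => ⟪P (U s u), ((1 : H →L[ℂ] H) + K) (Φ s (P (U s u)))⟫)
        (⟪P (U t u), C t (P (U t u))⟫ + ⟪P (U t u), C1 t (P (U t u))⟫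
          + ⟪P (U t u), C2 t (P (U t u))⟫)
        (Ici 0) t)
    -- (b) selfadjointness and positivity of C(t)
    (hb : ∀ t ∈ Ici (0:ℝ), IsSelfAdjoint (C t) ∧
      ∀ w : H, ‖B t w‖ ^ 2 ≤ (⟪w, C t w⟫).re)
    -- (c) bound on C1(t)
    (hc1 : ∀ t ∈ Ici (0:ℝ), ∀ w : H,
      ‖⟪w, C1 t w⟫‖ ≤ ∑ j : Fin N, ∑ k : Fin N, ‖B' j t w‖ * ‖B' k t w‖)
    -- (d) integral propagation estimates for the B_j
    (hd : ∀ (u : H) (j : Fin N),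
      ∫⁻ t in Ioi (0:ℝ), ENNReal.ofReal (‖B' j t (P (U t u))‖ ^ 2)
        ≤ ENNReal.ofReal (c j * ‖u‖ ^ 2))
    -- (e) bound on C2(t)
    (he : ∀ t ∈ Ici (0:ℝ), ∀ w : H, ‖⟪w, C2 t w⟫‖ ≤ δ0 * ‖B t w‖ ^ 2) :
    ∃ C' : ℝ, 0 < C' ∧ ∀ u : H,
      ∫⁻ t in Ioi (0:ℝ), ENNReal.ofReal (‖B t (P (U t u))‖ ^ 2)
        ≤ ENNReal.ofReal (C' * ‖u‖ ^ 2) := by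
  classical
  obtain ⟨Cb₀, hCb₀⟩ := hUPbdd
  obtain ⟨CΦ₀, hCΦ₀⟩ := hΦbdd
  set Cb : ℝ := max Cb₀ 0 with hCbdef
  set CΦ : ℝ := max CΦ₀ 0 with hCΦdef
  have hCbnn : 0 ≤ Cb := le_max_right _ _
  have hCΦnn : 0 ≤ CΦ := le_max_right _ _
  set M : ℝ := ‖(1 : H →L[ℂ] H) + K‖ * CΦ * Cb ^ 2 with hMdef
  have hMnn : 0 ≤ M := by positivity
  set S : ℝ := ∑ j, c j with hSdef
  have hSnn : 0 ≤ S := Finset.sum_nonneg fun j _ => hc j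
  refine ⟨(2 * M + N * S) / (1 - δ0) + 1, ?_, ?_⟩
  · have h1 : 0 ≤ (2 * M + N * S) / (1 - δ0) :=
      div_nonneg (by positivity) (by linarith)
    linarith
  intro u
  -- the orbit
  have hwcont : Continuous fun t : ℝ => P (U t u) := P.continuous.comp (hUcont u)
  have hwb : ∀ t : ℝ, 0 ≤ t → ‖P (U t u)‖ ≤ Cb * ‖u‖ := by
    intro t ht
    have h1 : P (U t u) = ((U t).comp P) u := by
      rw [← hPU t]; rfl
    rw [h1]
    exact le_trans (ContinuousLinearMap.le_opNorm _ _)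
      (mul_le_mul_of_nonneg_right (le_trans (hCb₀ t ht) (le_max_left _ _))
        (norm_nonneg _))
  -- abbreviations
  set g : ℝ → ℝ := fun t => ‖B t (P (U t u))‖ ^ 2 with hgdef
  set gj : Fin N → ℝ → ℝ := fun j t => ‖B' j t (P (U t u))‖ ^ 2 with hgjdef
  set q : ℝ → ℝ := fun t => (N : ℝ) * ∑ j, gj j t with hqdef
  set G : ℝ → ℝ :=
    fun t => (⟪P (U t u), ((1 : H →L[ℂ] H) + K) (Φ t (P (U t u)))⟫).re with hGdef
  set D : ℝ → ℂ := fun t => ⟪P (U t u), C t (P (U t u))⟫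
      + ⟪P (U t u), C1 t (P (U t u))⟫ + ⟪P (U t u), C2 t (P (U t u))⟫ with hDdef
  -- continuity
  have hgcont : ContinuousOn g (Ici 0) := by
    rw [hgdef]
    exact ((strong_apply_continuousOn B hBcont hwcont).norm).pow 2
  have hgjcont : ∀ j, ContinuousOn (gj j) (Ici 0) := by
    intro j
    rw [hgjdef]
    exact ((strong_apply_continuousOn (B' j) (hB'cont j) hwcont).norm).pow 2
  have hqcont : ContinuousOn q (Ici 0) := by
    rw [hqdef]
    exact continuousOn_const.mul (continuousOn_finset_sum _ fun j _ => hgjcont j)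
  -- derivative of G
  have hG : ∀ t ∈ Ici (0:ℝ), HasDerivWithinAt G ((D t).re) (Ici 0) t := by
    intro t ht
    have h2 := (Complex.reCLM.hasFDerivAt).comp_hasDerivWithinAt t (ha u t ht)
    have h3 : HasDerivWithinAt (Complex.reCLM ∘ _) _ (Ici 0) t := h2
    simpa [hGdef, hDdef, Function.comp_def, Complex.reCLM_apply] using h3
  have hGcont : ContinuousOn G (Ici 0) := fun t ht => (hG t ht).continuousWithinAt
  -- bound on G
  have hGb : ∀ t : ℝ, 0 ≤ t → |G t| ≤ M * ‖u‖ ^ 2 := by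
    intro t ht
    have h1 : |G t| ≤ ‖⟪P (U t u), ((1 : H →L[ℂ] H) + K) (Φ t (P (U t u)))⟫‖ := by
      rw [hGdef]
      exact Complex.abs_re_le_norm _
    have h2 := norm_inner_le_norm (𝕜 := ℂ) (P (U t u))
      (((1 : H →L[ℂ] H) + K) (Φ t (P (U t u))))
    have h3 := ((1 : H →L[ℂ] H) + K).le_opNorm (Φ t (P (U t u)))
    have h4 : ‖Φ t (P (U t u))‖ ≤ CΦ * ‖P (U t u)‖ :=
      le_trans ((Φ t).le_opNorm _)
        (mul_le_mul_of_nonneg_right (le_trans (hCΦ₀ t ht) (le_max_left _ _))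
          (norm_nonneg _))
    have h5 := hwb t ht
    have hKnn := norm_nonneg ((1 : H →L[ℂ] H) + K)
    have hwnn := norm_nonneg (P (U t u))
    have hunn := norm_nonneg u
    have h6 : |G t| ≤ ‖P (U t u)‖ * (‖(1 : H →L[ℂ] H) + K‖ * (CΦ * ‖P (U t u)‖)) :=
      le_trans (h1.trans h2)
        (mul_le_mul_of_nonneg_left (h3.trans (mul_le_mul_of_nonneg_left h4 hKnn)) hwnn)
    have h8 : ‖P (U t u)‖ * ‖P (U t u)‖ ≤ (Cb * ‖u‖) * (Cb * ‖u‖) :=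
      mul_le_mul h5 h5 hwnn (by positivity)
    calc |G t| ≤ ‖P (U t u)‖ * (‖(1 : H →L[ℂ] H) + K‖ * (CΦ * ‖P (U t u)‖)) := h6
      _ = (‖(1 : H →L[ℂ] H) + K‖ * CΦ) * (‖P (U t u)‖ * ‖P (U t u)‖) := by ring
      _ ≤ (‖(1 : H →L[ℂ] H) + K‖ * CΦ) * ((Cb * ‖u‖) * (Cb * ‖u‖)) :=
          mul_le_mul_of_nonneg_left h8 (by positivity)
      _ = M * ‖u‖ ^ 2 := by rw [hMdef]; ring
  -- pointwise derivative lower bound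
  have hφle : ∀ t : ℝ, 0 ≤ t → (1 - δ0) * g t - q t ≤ (D t).re := by
    intro t ht
    have hbt := (hb t ht).2 (P (U t u))
    have hc1t := hc1 t ht (P (U t u))
    have het := he t ht (P (U t u))
    have hcs : (∑ j : Fin N, ∑ k : Fin N, ‖B' j t (P (U t u))‖ * ‖B' k t (P (U t u))‖)
        ≤ q t := by
      rw [← Finset.sum_mul_sum]
      calc (∑ j : Fin N, ‖B' j t (P (U t u))‖) * (∑ k : Fin N, ‖B' k t (P (U t u))‖)
          = (∑ j : Fin N, ‖B' j t (P (U t u))‖) ^ 2 := (sq _).symm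
        _ ≤ (Finset.univ.card : ℝ) * ∑ j : Fin N, ‖B' j t (P (U t u))‖ ^ 2 :=
            sq_sum_le_card_mul_sum_sq
        _ = q t := by rw [hqdef, hgjdef]; simp
    have hr1 : -(‖⟪P (U t u), C1 t (P (U t u))⟫‖)
        ≤ (⟪P (U t u), C1 t (P (U t u))⟫).re := by
      have h := Complex.abs_re_le_norm (⟪P (U t u), C1 t (P (U t u))⟫)
      have := neg_abs_le ((⟪P (U t u), C1 t (P (U t u))⟫).re)
      linarith
    have hr2 : -(‖⟪P (U t u), C2 t (P (U t u))⟫‖)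
        ≤ (⟪P (U t u), C2 t (P (U t u))⟫).re := by
      have h := Complex.abs_re_le_norm (⟪P (U t u), C2 t (P (U t u))⟫)
      have := neg_abs_le ((⟪P (U t u), C2 t (P (U t u))⟫).re)
      linarith
    have hDre : (D t).re = (⟪P (U t u), C t (P (U t u))⟫).re
        + (⟪P (U t u), C1 t (P (U t u))⟫).re
        + (⟪P (U t u), C2 t (P (U t u))⟫).re := by
      rw [hDdef]; simp
    have hgt : g t = ‖B t (P (U t u))‖ ^ 2 := by rw [hgdef]
    rw [hDre, hgt]
    linarith
  -- integrability
  have hgint : ∀ n : ℕ, IntegrableOn g (Ioc 0 (n:ℝ)) := fun n =>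
    ((hgcont.mono Icc_subset_Ici_self).integrableOn_Icc).mono_set Ioc_subset_Icc_self
  have hgjint : ∀ (j : Fin N) (n : ℕ), IntegrableOn (gj j) (Ioc 0 (n:ℝ)) := fun j n =>
    (((hgjcont j).mono Icc_subset_Ici_self).integrableOn_Icc).mono_set Ioc_subset_Icc_self
  have hqint : ∀ n : ℕ, IntegrableOn q (Ioc 0 (n:ℝ)) := fun n =>
    ((hqcont.mono Icc_subset_Ici_self).integrableOn_Icc).mono_set Ioc_subset_Icc_self
  have hφint : ∀ n : ℕ, IntegrableOn (fun t => (1 - δ0) * g t - q t) (Icc 0 (n:ℝ)) :=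
    fun n =>
    (((continuousOn_const.mul hgcont).sub hqcont).mono Icc_subset_Ici_self).integrableOn_Icc
  -- the gj integrals
  have hgjI : ∀ (j : Fin N) (n : ℕ), ∫ t in Ioc (0:ℝ) n, gj j t ≤ c j * ‖u‖ ^ 2 := by
    intro j n
    have h0 : 0 ≤ᵐ[volume.restrict (Ioc (0:ℝ) n)] gj j :=
      Eventually.of_forall fun t => by rw [hgjdef]; positivity
    have heq := ofReal_integral_eq_lintegral_ofReal (hgjint j n) h0
    have hle : (∫⁻ t in Ioc (0:ℝ) n, ENNReal.ofReal (gj j t))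
        ≤ ENNReal.ofReal (c j * ‖u‖ ^ 2) := by
      refine le_trans (lintegral_mono_set Ioc_subset_Ioi_self) ?_
      have := hd u j
      rw [hgjdef]
      exact this
    rw [← heq] at hle
    exact (ENNReal.ofReal_le_ofReal_iff (mul_nonneg (hc j) (sq_nonneg _))).mp hle
  -- FTC bound
  have hkey : ∀ n : ℕ, ∫ t in Ioc (0:ℝ) n, g t
      ≤ ((2 * M + N * S) / (1 - δ0) + 1) * ‖u‖ ^ 2 := by
    intro n
    have hn0 : (0:ℝ) ≤ n := n.cast_nonneg
    have hFTC : (∫ t in (0:ℝ)..n, ((1 - δ0) * g t - q t)) ≤ G n - G 0 := by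
      apply intervalIntegral.integral_le_sub_of_hasDeriv_right_of_le hn0
        (hGcont.mono Icc_subset_Ici_self)
        (fun x hx => (hG x (le_of_lt hx.1)).mono fun y hy => le_trans hx.1.le (le_of_lt hy))
        (hφint n)
        (fun x hx => hφle x hx.1.le)
    rw [intervalIntegral.integral_of_le hn0] at hFTC
    have hsplit : (∫ t in Ioc (0:ℝ) n, ((1 - δ0) * g t - q t))
        = (1 - δ0) * (∫ t in Ioc (0:ℝ) n, g t) - ∫ t in Ioc (0:ℝ) n, q t := by
      rw [integral_sub ((hgint n).const_mul _) (hqint n), integral_const_mul]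
    have hqI : (∫ t in Ioc (0:ℝ) n, q t) ≤ (N:ℝ) * S * ‖u‖ ^ 2 := by
      have h1 : (∫ t in Ioc (0:ℝ) n, q t)
          = (N:ℝ) * ∑ j, ∫ t in Ioc (0:ℝ) n, gj j t := by
        simp only [hqdef]
        rw [integral_const_mul, integral_finset_sum _ (fun j _ => hgjint j n)]
      rw [h1]
      have h2 : (∑ j, ∫ t in Ioc (0:ℝ) n, gj j t) ≤ ∑ j, c j * ‖u‖ ^ 2 :=
        Finset.sum_le_sum fun j _ => hgjI j n
      have h3 : (∑ j, c j * ‖u‖ ^ 2) = S * ‖u‖ ^ 2 := by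
        rw [hSdef, Finset.sum_mul]
      calc (N:ℝ) * ∑ j, ∫ t in Ioc (0:ℝ) n, gj j t
          ≤ (N:ℝ) * (S * ‖u‖ ^ 2) := by
            apply mul_le_mul_of_nonneg_left _ (Nat.cast_nonneg N)
            rw [← h3]; exact h2
        _ = (N:ℝ) * S * ‖u‖ ^ 2 := by ring
    have hGn := hGb n hn0
    have hG0 := hGb 0 le_rfl
    have hmain : (1 - δ0) * (∫ t in Ioc (0:ℝ) n, g t)
        ≤ (2 * M + N * S) * ‖u‖ ^ 2 := by
      have := abs_le.mp hGn
      have := abs_le.mp hG0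
      nlinarith [hFTC, hsplit, hqI]
    have hpos : (0:ℝ) < 1 - δ0 := by linarith
    have h4 : (∫ t in Ioc (0:ℝ) n, g t) ≤ ((2 * M + N * S) / (1 - δ0)) * ‖u‖ ^ 2 := by
      rw [div_mul_eq_mul_div, le_div_iff₀ hpos]
      nlinarith
    have h5 : ((2 * M + N * S) / (1 - δ0)) * ‖u‖ ^ 2
        ≤ ((2 * M + N * S) / (1 - δ0) + 1) * ‖u‖ ^ 2 := by
      apply mul_le_mul_of_nonneg_right _ (sq_nonneg _)
      linarith
    linarith
  -- pass to the Lebesgue integral over Ioi 0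
  have hIoi : Ioi (0:ℝ) = ⋃ n : ℕ, Ioc 0 (n:ℝ) := by
    ext t
    simp only [mem_Ioi, mem_iUnion, mem_Ioc]
    constructor
    · intro ht
      obtain ⟨n, hn⟩ := exists_nat_ge t
      exact ⟨n, ht, hn⟩
    · rintro ⟨n, hn, _⟩
      exact hn
  have hmono : Monotone (fun n : ℕ => Ioc (0:ℝ) (n:ℝ)) :=
    fun a b hab => Ioc_subset_Ioc le_rfl (Nat.cast_le.mpr hab)
  have hdir : Directed (· ⊆ ·) (fun n : ℕ => Ioc (0:ℝ) (n:ℝ)) := hmono.directed_le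
  calc ∫⁻ t in Ioi (0:ℝ), ENNReal.ofReal (‖B t (P (U t u))‖ ^ 2)
      = ⨆ n : ℕ, ∫⁻ t in Ioc (0:ℝ) (n:ℝ), ENNReal.ofReal (g t) := by
        rw [hIoi, setLIntegral_iUnion_of_directed _ hdir]
    _ ≤ ENNReal.ofReal (((2 * M + N * S) / (1 - δ0) + 1) * ‖u‖ ^ 2) := by
        apply iSup_le
        intro n
        have h0 : 0 ≤ᵐ[volume.restrict (Ioc (0:ℝ) n)] g :=
          Eventually.of_forall fun t => by rw [hgdef]; positivity
        rw [← ofReal_integral_eq_lintegral_ofReal (hgint n) h0]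
        exact ENNReal.ofReal_le_ofReal (hkey n)
end

section
/- Existence of limits of Krein observables along the evolution (Proposition D.1(2)). Let C1(t), B_1(t), ..., B_N(t) be strongly continuous families of bounded operators on H for t ≥ 0 and c_1, ..., c_N ≥ 0, and assume: (a) for every u ∈ H the function f_u(t) := [P u_t, Φ(t) P u_t] is differentiable on [0,∞) with f_u'(t) = ⟨P u_t, C1(t) P u_t⟩; (b) |⟨w, C1(t) w⟩| ≤ Σ_{1≤j,k≤N} ‖B_j(t) w‖ · ‖B_k(t) w‖ for all w ∈ H; (c) ∫_0^∞ ‖B_j(t) P u_t‖² dt ≤ c_j ‖u‖² for every u ∈ H and every j. Then for every u ∈ H the limit lim_{t→+∞} [P u_t, Φ(t) P u_t] exists. -/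
open MeasureTheory Set Filter
open scoped ComplexInnerProductSpace Topology

lemma aux_joint_cont {H : Type*} [NormedAddCommGroup H] [NormedSpace ℂ H] [CompleteSpace H]
    (F : ℝ → H →L[ℂ] H) (hF : ∀ u : H, ContinuousOn (fun t : ℝ => F t u) (Ici 0))
    (w : ℝ → H) (hw : ContinuousOn w (Ici 0)) :
    ContinuousOn (fun t : ℝ => F t (w t)) (Ici 0) := by
  intro t0 ht0
  set S : Set ℝ := Icc 0 (t0 + 1) with hSdef
  have hSsub : S ⊆ Ici (0:ℝ) := Icc_subset_Ici_self
  have ht0S : t0 ∈ S := ⟨ht0, by linarith [mem_Ici.mp ht0]⟩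
  have hSmem : S ∈ 𝓝[Ici 0] t0 := by
    have h1 : Iic (t0 + 1) ∈ 𝓝 t0 := Iic_mem_nhds (by linarith)
    have h2 : Iic (t0 + 1) ∩ Ici 0 ∈ 𝓝[Ici 0] t0 :=
      Filter.inter_mem (mem_nhdsWithin_of_mem_nhds h1) self_mem_nhdsWithin
    refine Filter.mem_of_superset h2 ?_
    intro x hx; exact ⟨hx.2, hx.1⟩
  obtain ⟨M, hM⟩ := banach_steinhaus (g := fun s : S => F s) (by
    intro x
    obtain ⟨C, hC⟩ := (isCompact_Icc).exists_bound_of_continuousOn ((hF x).mono hSsub)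
    exact ⟨C, fun s => hC s s.2⟩)
  refine ContinuousWithinAt.mono_of_mem_nhdsWithin ?_ hSmem
  have hwS : ContinuousWithinAt w S t0 := (hw.mono hSsub) t0 ht0S
  have h1 : Tendsto (fun t => F t (w t - w t0)) (𝓝[S] t0) (𝓝 0) := by
    have hb : ∀ᶠ t in 𝓝[S] t0, ‖F t (w t - w t0)‖ ≤ M * ‖w t - w t0‖ := by
      filter_upwards [self_mem_nhdsWithin] with t ht
      calc ‖F t (w t - w t0)‖ ≤ ‖F t‖ * ‖w t - w t0‖ := (F t).le_opNorm _
        _ ≤ M * ‖w t - w t0‖ :=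
            mul_le_mul_of_nonneg_right (hM ⟨t, ht⟩) (norm_nonneg _)
    have hz : Tendsto (fun t => M * ‖w t - w t0‖) (𝓝[S] t0) (𝓝 0) := by
      have : Tendsto (fun t => w t - w t0) (𝓝[S] t0) (𝓝 0) := by
        simpa using hwS.sub_const (w t0)
      simpa using (this.norm.const_mul M)
    exact squeeze_zero_norm' hb hz
  have h2 : Tendsto (fun t => F t (w t0)) (𝓝[S] t0) (𝓝 (F t0 (w t0))) :=
    ((hF (w t0)).mono hSsub) t0 ht0S
  have := h1.add h2
  simp only [zero_add] at this
  refine this.congr (fun t => ?_)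
  simp [map_sub]

/-- **Existence of limits of Krein observables along the evolution** (Proposition D.1(2)). -/
theorem abstract_limit_of_krein_observable
    {H : Type*} [NormedAddCommGroup H] [InnerProductSpace ℂ H] [CompleteSpace H]
    (K : H →L[ℂ] H) (hK : IsSelfAdjoint K)
    (hKunit : IsUnit ((1 : H →L[ℂ] H) + K))
    (U : ℝ → H →L[ℂ] H) (hU0 : U 0 = 1)
    (hUgrp : ∀ s t : ℝ, U (s + t) = (U s).comp (U t))
    (hUcont : ∀ u : H, Continuous fun t : ℝ => U t u)
    (hUkrein : ∀ (t : ℝ) (u v : H),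
      ⟪U t u, ((1 : H →L[ℂ] H) + K) (U t v)⟫ = ⟪u, ((1 : H →L[ℂ] H) + K) v⟫)
    (P : H →L[ℂ] H) (hPU : ∀ t : ℝ, P.comp (U t) = (U t).comp P)
    (hUPbdd : ∃ Cb : ℝ, ∀ t : ℝ, 0 ≤ t → ‖(U t).comp P‖ ≤ Cb)
    (Φ : ℝ → H →L[ℂ] H)
    (hΦcont : ∀ u : H, ContinuousOn (fun t : ℝ => Φ t u) (Ici 0))
    (hΦbdd : ∃ CΦ : ℝ, ∀ t : ℝ, 0 ≤ t → ‖Φ t‖ ≤ CΦ)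
    (N : ℕ) (C1 : ℝ → H →L[ℂ] H) (B' : Fin N → ℝ → H →L[ℂ] H)
    (hC1cont : ∀ u : H, ContinuousOn (fun t : ℝ => C1 t u) (Ici 0))
    (hB'cont : ∀ (j : Fin N) (u : H), ContinuousOn (fun t : ℝ => B' j t u) (Ici 0))
    (c : Fin N → ℝ) (hc : ∀ j, 0 ≤ c j)
    -- (a) the Heisenberg derivative identity
    (ha : ∀ u : H, ∀ t ∈ Ici (0:ℝ),
      HasDerivWithinAt
        (fun s : ℝ => ⟪P (U s u), ((1 : H →L[ℂ] H) + K) (Φ s (P (U s u)))⟫)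
        (⟪P (U t u), C1 t (P (U t u))⟫) (Ici 0) t)
    -- (b) bound on C1(t)
    (hc1 : ∀ t ∈ Ici (0:ℝ), ∀ w : H,
      ‖⟪w, C1 t w⟫‖ ≤ ∑ j : Fin N, ∑ k : Fin N, ‖B' j t w‖ * ‖B' k t w‖)
    -- (c) integral propagation estimates for the B_j
    (hd : ∀ (u : H) (j : Fin N),
      ∫⁻ t in Ioi (0:ℝ), ENNReal.ofReal (‖B' j t (P (U t u))‖ ^ 2)
        ≤ ENNReal.ofReal (c j * ‖u‖ ^ 2)) :
    ∀ u : H, ∃ l : ℂ,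
      Tendsto (fun t : ℝ => ⟪P (U t u), ((1 : H →L[ℂ] H) + K) (Φ t (P (U t u)))⟫)
        atTop (𝓝 l) := by
  intro u
  -- the moving vector
  have hwcont : Continuous (fun t : ℝ => P (U t u)) := P.continuous.comp (hUcont u)
  set f : ℝ → ℂ := fun t => ⟪P (U t u), ((1 : H →L[ℂ] H) + K) (Φ t (P (U t u)))⟫ with hf
  set g : ℝ → ℂ := fun t => ⟪P (U t u), C1 t (P (U t u))⟫ with hg
  set a : Fin N → ℝ → ℝ := fun j t => ‖B' j t (P (U t u))‖ with haa
  have hacont : ∀ j, ContinuousOn (a j) (Ici 0) := fun j =>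
    (aux_joint_cont (B' j) (hB'cont j) _ hwcont.continuousOn).norm
  have hgcont : ContinuousOn g (Ici 0) :=
    ContinuousOn.inner hwcont.continuousOn
      (aux_joint_cont C1 hC1cont _ hwcont.continuousOn)
  -- integrability of a j ^ 2
  have haint : ∀ j, IntegrableOn (fun t => a j t ^ 2) (Ioi 0) := by
    intro j
    have hm : AEStronglyMeasurable (fun t => a j t ^ 2) (volume.restrict (Ioi 0)) :=
      (((hacont j).mono Ioi_subset_Ici_self).pow 2).aestronglyMeasurable measurableSet_Ioi
    refine ⟨hm, ?_⟩
    rw [hasFiniteIntegral_iff_ofReal (Filter.Eventually.of_forall fun t => sq_nonneg _)]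
    exact lt_of_le_of_lt (hd u j) ENNReal.ofReal_lt_top
  -- integrability of products
  have hprod : ∀ j k, IntegrableOn (fun t => a j t * a k t) (Ioi 0) := by
    intro j k
    refine Integrable.mono' ((haint j).add (haint k)) ?_ ?_
    · exact ((((hacont j).mono Ioi_subset_Ici_self).mul
        ((hacont k).mono Ioi_subset_Ici_self))).aestronglyMeasurable measurableSet_Ioi
    · refine Filter.Eventually.of_forall fun t => ?_
      have h1 : (0:ℝ) ≤ a j t := norm_nonneg _
      have h2 : (0:ℝ) ≤ a k t := norm_nonneg _
      rw [Real.norm_eq_abs, abs_of_nonneg (mul_nonneg h1 h2)]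
      simp only [Pi.add_apply]
      nlinarith [sq_nonneg (a j t - a k t)]
  have hhint : IntegrableOn (fun t => ∑ j : Fin N, ∑ k : Fin N, a j t * a k t) (Ioi 0) := by
    apply integrable_finset_sum
    intro j _
    exact integrable_finset_sum _ (fun k _ => hprod j k)
  -- integrability of g
  have hgint : IntegrableOn g (Ioi 0) := by
    refine Integrable.mono' hhint
      ((hgcont.mono Ioi_subset_Ici_self).aestronglyMeasurable measurableSet_Ioi) ?_
    rw [ae_restrict_iff' measurableSet_Ioi]
    exact Filter.Eventually.of_forall fun t ht => hc1 t (mem_Ici.mpr (le_of_lt ht)) _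
  -- FTC on [0, t]
  have hfcont : ContinuousOn f (Ici 0) := fun t ht => (ha u t ht).continuousWithinAt
  have key : ∀ t : ℝ, 0 ≤ t → (∫ s in (0:ℝ)..t, g s) = f t - f 0 := by
    intro t ht
    refine intervalIntegral.integral_eq_sub_of_hasDeriv_right_of_le ht
      (hfcont.mono Icc_subset_Ici_self) (fun x hx => ?_) ?_
    · exact (ha u x (le_of_lt hx.1)).mono (fun y hy => le_of_lt (lt_trans hx.1 hy))
    · rw [intervalIntegrable_iff_integrableOn_Ioc_of_le ht]
      exact hgint.mono_set Ioc_subset_Ioi_self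
  have hlim : Tendsto (fun t : ℝ => ∫ s in (0:ℝ)..t, g s) atTop (𝓝 (∫ s in Ioi 0, g s)) :=
    intervalIntegral_tendsto_integral_Ioi 0 hgint tendsto_id
  refine ⟨f 0 + ∫ s in Ioi 0, g s, ?_⟩
  have h2 : Tendsto (fun t : ℝ => f 0 + ∫ s in (0:ℝ)..t, g s) atTop
      (𝓝 (f 0 + ∫ s in Ioi 0, g s)) := tendsto_const_nhds.add hlim
  refine h2.congr' ?_
  filter_upwards [eventually_ge_atTop (0:ℝ)] with t ht
  rw [key t ht]; ring
end

section
/- Propagation estimate with integrable remainders (Corollary D.2(1)). Let D(t), R0(t), B(t), B_1(t), ..., B_N(t) be strongly continuous families of bounded operators on H for t ≥ 0 and c_1, ..., c_N ≥ 0, and assume: (a) for every u ∈ H the function f_u(t) := [P u_t, Φ(t) P u_t] is differentiable on [0,∞) with f_u'(t) = [P u_t, D(t) P u_t] + [P u_t, R0(t) P u_t]; (b) t ↦ ‖R0(t)‖ and t ↦ ‖K D(t)‖ are integrable on [0,∞); (c) each D(t) is selfadjoint on the Hilbert space H and ⟨w, D(t) w⟩ ≥ ‖B(t) w‖² − Σ_{j=1}^{N}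 ‖B_j(t) w‖² for all w ∈ H; (d) ∫_0^∞ ‖B_j(t) P u_t‖² dt ≤ c_j ‖u‖² for every u ∈ H and every j. Then there is a constant C' > 0 such that ∫_0^∞ ‖B(t) P u_t‖² dt ≤ C' ‖u‖² for all u ∈ H. -/
open MeasureTheory Set Filter
open scoped ComplexInnerProductSpace Topology

/-- If `A : ℝ → H →L[ℂ] H` is strongly continuous on `[0,∞)` and `w : ℝ → H` is continuous,
then `t ↦ A t (w t)` is continuous on `[0,∞)`. -/
private lemma strong_cont_apply {H : Type*} [NormedAddCommGroup H] [NormedSpace ℂ H]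
    [CompleteSpace H] {A : ℝ → H →L[ℂ] H}
    (hA : ∀ v : H, ContinuousOn (fun t : ℝ => A t v) (Ici 0))
    {w : ℝ → H} (hw : Continuous w) :
    ContinuousOn (fun t : ℝ => A t (w t)) (Ici (0:ℝ)) := by
  intro t₀ ht₀
  have ht₀' : (0:ℝ) ≤ t₀ := ht₀
  obtain ⟨M, hM⟩ : ∃ M : ℝ, ∀ s : Icc (0:ℝ) (t₀+1), ‖A s.1‖ ≤ M := by
    apply banach_steinhaus (g := fun s : Icc (0:ℝ) (t₀+1) => A s.1)
    intro x
    obtain ⟨C, hC⟩ := isCompact_Icc.exists_bound_of_continuousOn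
      ((hA x).mono (Icc_subset_Ici_self : Icc (0:ℝ) (t₀+1) ⊆ Ici 0))
    exact ⟨C, fun s => hC s.1 s.2⟩
  have l1 : Tendsto (fun s => M * ‖w s - w t₀‖ + ‖A s (w t₀) - A t₀ (w t₀)‖)
      (𝓝[Ici 0] t₀) (𝓝 0) := by
    have h1 : Tendsto (fun s => ‖w s - w t₀‖) (𝓝[Ici 0] t₀) (𝓝 0) := by
      have := ((hw.sub (continuous_const (y := w t₀))).tendsto t₀).norm
      simp only [Pi.sub_apply, sub_self, norm_zero] at this
      exact this.mono_left nhdsWithin_le_nhds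
    have h2 : Tendsto (fun s => ‖A s (w t₀) - A t₀ (w t₀)‖) (𝓝[Ici 0] t₀) (𝓝 0) := by
      have h3 : Tendsto (fun t : ℝ => A t (w t₀)) (𝓝[Ici 0] t₀) (𝓝 (A t₀ (w t₀))) :=
        hA (w t₀) t₀ ht₀
      simpa using (tendsto_sub_nhds_zero_iff.mpr h3).norm
    simpa using (tendsto_const_nhds.mul h1).add h2
  have hev : ∀ᶠ s in 𝓝[Ici 0] t₀, ‖A s (w s) - A t₀ (w t₀)‖ ≤
      M * ‖w s - w t₀‖ + ‖A s (w t₀) - A t₀ (w t₀)‖ := by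
    filter_upwards [self_mem_nhdsWithin,
      mem_nhdsWithin_of_mem_nhds (Iio_mem_nhds (lt_add_one t₀))] with s hs1 hs2
    have hb : ‖A s‖ ≤ M := hM ⟨s, hs1, hs2.le⟩
    calc ‖A s (w s) - A t₀ (w t₀)‖
        ≤ ‖A s (w s) - A s (w t₀)‖ + ‖A s (w t₀) - A t₀ (w t₀)‖ :=
          norm_sub_le_norm_sub_add_norm_sub _ _ _
      _ ≤ M * ‖w s - w t₀‖ + ‖A s (w t₀) - A t₀ (w t₀)‖ := by
          have : ‖A s (w s) - A s (w t₀)‖ ≤ M * ‖w s - w t₀‖ := by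
            rw [← map_sub]
            exact le_trans ((A s).le_opNorm _)
              (mul_le_mul_of_nonneg_right hb (norm_nonneg _))
          linarith
  exact tendsto_sub_nhds_zero_iff.mp (squeeze_zero_norm' hev l1)

set_option maxHeartbeats 2000000 in
/-- **Propagation estimate with integrable remainders** (Corollary D.2(1)). -/
theorem propagation_estimate_integrable_remainder
    {H : Type*} [NormedAddCommGroup H] [InnerProductSpace ℂ H] [CompleteSpace H]
    (K : H →L[ℂ] H) (hK : IsSelfAdjoint K)
    (hKunit : IsUnit ((1 : H →L[ℂ] H) + K))
    (U : ℝ → H →L[ℂ] H) (hU0 : U 0 = 1)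
    (hUgrp : ∀ s t : ℝ, U (s + t) = (U s).comp (U t))
    (hUcont : ∀ u : H, Continuous fun t : ℝ => U t u)
    (hUkrein : ∀ (t : ℝ) (u v : H),
      ⟪U t u, ((1 : H →L[ℂ] H) + K) (U t v)⟫ = ⟪u, ((1 : H →L[ℂ] H) + K) v⟫)
    (P : H →L[ℂ] H) (hPU : ∀ t : ℝ, P.comp (U t) = (U t).comp P)
    (hUPbdd : ∃ Cb : ℝ, ∀ t : ℝ, 0 ≤ t → ‖(U t).comp P‖ ≤ Cb)
    (Φ : ℝ → H →L[ℂ] H)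
    (hΦcont : ∀ u : H, ContinuousOn (fun t : ℝ => Φ t u) (Ici 0))
    (hΦbdd : ∃ CΦ : ℝ, ∀ t : ℝ, 0 ≤ t → ‖Φ t‖ ≤ CΦ)
    (N : ℕ) (D R0 B : ℝ → H →L[ℂ] H) (B' : Fin N → ℝ → H →L[ℂ] H)
    (hDcont : ∀ u : H, ContinuousOn (fun t : ℝ => D t u) (Ici 0))
    (hR0cont : ∀ u : H, ContinuousOn (fun t : ℝ => R0 t u) (Ici 0))
    (hBcont : ∀ u : H, ContinuousOn (fun t : ℝ => B t u) (Ici 0))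
    (hB'cont : ∀ (j : Fin N) (u : H), ContinuousOn (fun t : ℝ => B' j t u) (Ici 0))
    (c : Fin N → ℝ) (hc : ∀ j, 0 ≤ c j)
    -- (a) the Heisenberg derivative identity, with both terms in the Krein form
    (ha : ∀ u : H, ∀ t ∈ Ici (0:ℝ),
      HasDerivWithinAt
        (fun s : ℝ => ⟪P (U s u), ((1 : H →L[ℂ] H) + K) (Φ s (P (U s u)))⟫)
        (⟪P (U t u), ((1 : H →L[ℂ] H) + K) (D t (P (U t u)))⟫
          + ⟪P (U t u), ((1 : H →L[ℂ] H) + K) (R0 t (P (U t u)))⟫)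
        (Ici 0) t)
    -- (b) integrability of the remainders
    (hR0int : IntegrableOn (fun t : ℝ => ‖R0 t‖) (Ici 0))
    (hKDint : IntegrableOn (fun t : ℝ => ‖K.comp (D t)‖) (Ici 0))
    -- (c) selfadjointness and lower bound for D(t)
    (hD : ∀ t ∈ Ici (0:ℝ), IsSelfAdjoint (D t) ∧
      ∀ w : H, ‖B t w‖ ^ 2 - ∑ j : Fin N, ‖B' j t w‖ ^ 2 ≤ (⟪w, D t w⟫).re)
    -- (d) integral propagation estimates for the B_j
    (hd : ∀ (u : H) (j : Fin N),
      ∫⁻ t in Ioi (0:ℝ), ENNReal.ofReal (‖B' j t (P (U t u))‖ ^ 2)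
        ≤ ENNReal.ofReal (c j * ‖u‖ ^ 2)) :
    ∃ C' : ℝ, 0 < C' ∧ ∀ u : H,
      ∫⁻ t in Ioi (0:ℝ), ENNReal.ofReal (‖B t (P (U t u))‖ ^ 2)
        ≤ ENNReal.ofReal (C' * ‖u‖ ^ 2) := by
  classical
  obtain ⟨Cb, hCb⟩ := hUPbdd
  obtain ⟨CΦ, hCΦ⟩ := hΦbdd
  have hCb0 : 0 ≤ Cb := le_trans (norm_nonneg _) (hCb 0 le_rfl)
  have hCΦ0 : 0 ≤ CΦ := le_trans (norm_nonneg _) (hCΦ 0 le_rfl)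
  set CK : ℝ := ‖(1 : H →L[ℂ] H) + K‖ with hCK_def
  have hCK0 : 0 ≤ CK := norm_nonneg _
  set MK : ℝ := ∫ t in Ici (0:ℝ), ‖K.comp (D t)‖ with hMK_def
  set MR : ℝ := ∫ t in Ici (0:ℝ), ‖R0 t‖ with hMR_def
  have hMK0 : 0 ≤ MK :=
    setIntegral_nonneg measurableSet_Ici fun t _ => norm_nonneg _
  have hMR0 : 0 ≤ MR :=
    setIntegral_nonneg measurableSet_Ici fun t _ => norm_nonneg _
  have hsum0 : 0 ≤ ∑ j, c j := Finset.sum_nonneg fun j _ => hc j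
  set C0 : ℝ := 2*CK*CΦ*Cb^2 + Cb^2*(MK + CK*MR) + (∑ j, c j) with hC0_def
  have hC00 : 0 ≤ C0 := by
    have h1 : 0 ≤ 2*CK*CΦ*Cb^2 :=
      mul_nonneg (mul_nonneg (mul_nonneg (by norm_num) hCK0) hCΦ0) (sq_nonneg Cb)
    have h2 : 0 ≤ Cb^2*(MK + CK*MR) :=
      mul_nonneg (sq_nonneg Cb) (add_nonneg hMK0 (mul_nonneg hCK0 hMR0))
    linarith
  clear_value MK MR C0
  refine ⟨C0 + 1, by linarith, fun u => ?_⟩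
  -- notation
  have hw_cont : Continuous (fun t : ℝ => P (U t u)) := P.continuous.comp (hUcont u)
  have hw_bound : ∀ t : ℝ, 0 ≤ t → ‖P (U t u)‖ ≤ Cb * ‖u‖ := by
    intro t ht
    have hcomm : P (U t u) = ((U t).comp P) u := by
      rw [← hPU t]; rfl
    rw [hcomm]
    exact le_trans (ContinuousLinearMap.le_opNorm _ _)
      (mul_le_mul_of_nonneg_right (hCb t ht) (norm_nonneg u))
  have hw_sq : ∀ t : ℝ, 0 ≤ t → ‖P (U t u)‖^2 ≤ Cb^2 * ‖u‖^2 := by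
    intro t ht
    rw [← mul_pow]
    exact pow_le_pow_left₀ (norm_nonneg _) (hw_bound t ht) 2
  -- continuity of the quadratic expressions
  have hBc : ContinuousOn (fun t : ℝ => ‖B t (P (U t u))‖^2) (Ici (0:ℝ)) :=
    ((strong_cont_apply hBcont hw_cont).norm.pow 2)
  have hB'c : ∀ j, ContinuousOn (fun t : ℝ => ‖B' j t (P (U t u))‖^2) (Ici (0:ℝ)) :=
    fun j => ((strong_cont_apply (hB'cont j) hw_cont).norm.pow 2)
  -- the remainder bound function
  set g : ℝ → ℝ :=
    fun t => Cb^2*‖u‖^2 * ‖K.comp (D t)‖ + CK * (Cb^2*‖u‖^2) * ‖R0 t‖ with hg_def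
  have hg_int : IntegrableOn g (Ici (0:ℝ)) :=
    (hKDint.const_mul _).add (hR0int.const_mul _)
  -- the function F and its derivative
  set F : ℝ → ℝ :=
    fun s => (⟪P (U s u), ((1 : H →L[ℂ] H) + K) (Φ s (P (U s u)))⟫).re with hF_def
  set dF : ℝ → ℝ :=
    fun t => (⟪P (U t u), ((1 : H →L[ℂ] H) + K) (D t (P (U t u)))⟫
      + ⟪P (U t u), ((1 : H →L[ℂ] H) + K) (R0 t (P (U t u)))⟫).re with hdF_def
  have hFd : ∀ t ∈ Ici (0:ℝ), HasDerivWithinAt F (dF t) (Ici 0) t := by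
    intro t ht
    have := (Complex.reCLM.hasFDerivAt).comp_hasDerivWithinAt t (ha u t ht)
    simpa [hF_def, hdF_def, Function.comp_def, Complex.reCLM_apply] using this
  -- lower bound for the real part of an inner product
  have hre : ∀ (a b : H), -(‖a‖ * ‖b‖) ≤ (⟪a, b⟫ : ℂ).re := by
    intro a b
    have h1 : ‖(⟪a, b⟫ : ℂ)‖ ≤ ‖a‖ * ‖b‖ := norm_inner_le_norm a b
    have h2 : |(⟪a, b⟫ : ℂ).re| ≤ ‖(⟪a, b⟫ : ℂ)‖ := by
      exact Complex.abs_re_le_norm _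
    have h3 := neg_abs_le ((⟪a, b⟫ : ℂ).re)
    linarith
  -- bound on |F|
  have hFb : ∀ t : ℝ, 0 ≤ t → |F t| ≤ CK*CΦ*Cb^2*‖u‖^2 := by
    intro t ht
    have h1 : ‖(⟪P (U t u), ((1 : H →L[ℂ] H) + K) (Φ t (P (U t u)))⟫ : ℂ)‖
        ≤ ‖P (U t u)‖ * ‖((1 : H →L[ℂ] H) + K) (Φ t (P (U t u)))‖ :=
      norm_inner_le_norm _ _
    have h2 : ‖((1 : H →L[ℂ] H) + K) (Φ t (P (U t u)))‖ ≤ CK * (CΦ * ‖P (U t u)‖) := by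
      refine le_trans (ContinuousLinearMap.le_opNorm _ _) ?_
      refine mul_le_mul_of_nonneg_left ?_ hCK0
      exact le_trans (ContinuousLinearMap.le_opNorm _ _)
        (mul_le_mul_of_nonneg_right (hCΦ t ht) (norm_nonneg _))
    have h3 : |F t| ≤ ‖(⟪P (U t u), ((1 : H →L[ℂ] H) + K) (Φ t (P (U t u)))⟫ : ℂ)‖ := by
      rw [hF_def]; exact Complex.abs_re_le_norm _
    have h4 : ‖P (U t u)‖ * (CK * (CΦ * ‖P (U t u)‖)) = CK*CΦ*(‖P (U t u)‖^2) := by ring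
    have h5 : CK*CΦ*(‖P (U t u)‖^2) ≤ CK*CΦ*(Cb^2*‖u‖^2) :=
      mul_le_mul_of_nonneg_left (hw_sq t ht) (by positivity)
    have h6 : ‖P (U t u)‖ * ‖((1 : H →L[ℂ] H) + K) (Φ t (P (U t u)))‖
        ≤ ‖P (U t u)‖ * (CK * (CΦ * ‖P (U t u)‖)) :=
      mul_le_mul_of_nonneg_left h2 (norm_nonneg _)
    calc |F t| ≤ ‖P (U t u)‖ * ‖((1 : H →L[ℂ] H) + K) (Φ t (P (U t u)))‖ :=
          le_trans h3 h1
      _ ≤ CK*CΦ*(Cb^2*‖u‖^2) := by linarith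
      _ = CK*CΦ*Cb^2*‖u‖^2 := by ring
  -- main estimate on finite intervals
  have main : ∀ T : ℝ, 0 ≤ T →
      ∫ t in Ioc (0:ℝ) T, ‖B t (P (U t u))‖^2 ≤ C0 * ‖u‖^2 := by
    intro T hT
    have hIic : Icc (0:ℝ) T ⊆ Ici 0 := Icc_subset_Ici_self
    have hB_int : IntegrableOn (fun t : ℝ => ‖B t (P (U t u))‖^2) (Icc 0 T) :=
      (hBc.mono hIic).integrableOn_Icc
    have hB'_int : ∀ j, IntegrableOn (fun t : ℝ => ‖B' j t (P (U t u))‖^2) (Icc 0 T) :=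
      fun j => ((hB'c j).mono hIic).integrableOn_Icc
    have hg_intT : IntegrableOn g (Icc 0 T) := hg_int.mono_set hIic
    have hsum_int : IntegrableOn (fun t : ℝ => ∑ j, ‖B' j t (P (U t u))‖^2 + g t) (Icc 0 T) :=
      (integrable_finset_sum _ fun j _ => hB'_int j).add hg_intT
    have hφ_int : IntegrableOn
        (fun t : ℝ => ‖B t (P (U t u))‖^2 - (∑ j, ‖B' j t (P (U t u))‖^2 + g t))
        (Icc 0 T) := hB_int.sub hsum_int
    -- continuity of F on [0, T]
    have hFcont : ContinuousOn F (Icc 0 T) :=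
      fun t ht => ((hFd t (hIic ht)).continuousWithinAt).mono hIic
    -- right derivatives
    have hder : ∀ x ∈ Ioo (0:ℝ) T, HasDerivWithinAt F (dF x) (Ioi x) x :=
      fun x hx => (hFd x hx.1.le).mono fun y hy => (hx.1.trans hy).le
    -- pointwise lower bound for the derivative
    have hφg : ∀ x ∈ Ioo (0:ℝ) T,
        ‖B x (P (U x u))‖^2 - (∑ j, ‖B' j x (P (U x u))‖^2 + g x) ≤ dF x := by
      intro x hx
      have hx0 : (0:ℝ) ≤ x := hx.1.le
      have e1 : dF x = (⟪P (U x u), D x (P (U x u))⟫ : ℂ).re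
          + (⟪P (U x u), K (D x (P (U x u)))⟫ : ℂ).re
          + (⟪P (U x u), ((1 : H →L[ℂ] H) + K) (R0 x (P (U x u)))⟫ : ℂ).re := by
        simp [hdF_def, ContinuousLinearMap.add_apply, ContinuousLinearMap.one_apply,
          inner_add_right, Complex.add_re]
      have hDlow : ‖B x (P (U x u))‖^2 - ∑ j, ‖B' j x (P (U x u))‖^2
          ≤ (⟪P (U x u), D x (P (U x u))⟫ : ℂ).re := (hD x hx0).2 _
      have hKD : -(Cb^2*‖u‖^2 * ‖K.comp (D x)‖)
          ≤ (⟪P (U x u), K (D x (P (U x u)))⟫ : ℂ).re := by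
        have h1 := hre (P (U x u)) (K (D x (P (U x u))))
        have h2 : ‖K (D x (P (U x u)))‖ ≤ ‖K.comp (D x)‖ * ‖P (U x u)‖ :=
          (K.comp (D x)).le_opNorm _
        have h3 : ‖P (U x u)‖ * ‖K (D x (P (U x u)))‖
            ≤ ‖K.comp (D x)‖ * ‖P (U x u)‖^2 := by
          have := mul_le_mul_of_nonneg_left h2 (norm_nonneg (P (U x u)))
          nlinarith [norm_nonneg (P (U x u))]
        have h4 : ‖K.comp (D x)‖ * ‖P (U x u)‖^2
            ≤ ‖K.comp (D x)‖ * (Cb^2*‖u‖^2) :=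
          mul_le_mul_of_nonneg_left (hw_sq x hx0) (norm_nonneg _)
        nlinarith
      have hR : -(CK * (Cb^2*‖u‖^2) * ‖R0 x‖)
          ≤ (⟪P (U x u), ((1 : H →L[ℂ] H) + K) (R0 x (P (U x u)))⟫ : ℂ).re := by
        have h1 := hre (P (U x u)) (((1 : H →L[ℂ] H) + K) (R0 x (P (U x u))))
        have h2 : ‖((1 : H →L[ℂ] H) + K) (R0 x (P (U x u)))‖
            ≤ CK * (‖R0 x‖ * ‖P (U x u)‖) := by
          refine le_trans (ContinuousLinearMap.le_opNorm _ _) ?_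
          exact mul_le_mul_of_nonneg_left ((R0 x).le_opNorm _) hCK0
        have h3 : ‖P (U x u)‖ * (CK * (‖R0 x‖ * ‖P (U x u)‖))
            = CK * ‖R0 x‖ * ‖P (U x u)‖^2 := by ring
        have h4 : CK * ‖R0 x‖ * ‖P (U x u)‖^2 ≤ CK * ‖R0 x‖ * (Cb^2*‖u‖^2) :=
          mul_le_mul_of_nonneg_left (hw_sq x hx0)
            (mul_nonneg hCK0 (norm_nonneg _))
        nlinarith [mul_le_mul_of_nonneg_left h2 (norm_nonneg (P (U x u)))]
      rw [e1, hg_def]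
      simp only
      linarith
    -- fundamental theorem of calculus inequality
    have hFTC :=
      intervalIntegral.integral_le_sub_of_hasDeriv_right_of_le hT hFcont hder hφ_int hφg
    -- interval integrabilities
    have hII_B : IntervalIntegrable (fun t : ℝ => ‖B t (P (U t u))‖^2) volume 0 T :=
      (intervalIntegrable_iff_integrableOn_Icc_of_le hT).mpr hB_int
    have hII_sum : IntervalIntegrable
        (fun t : ℝ => ∑ j, ‖B' j t (P (U t u))‖^2 + g t) volume 0 T :=
      (intervalIntegrable_iff_integrableOn_Icc_of_le hT).mpr hsum_int
    have hII_φ : IntervalIntegrable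
        (fun t : ℝ => ‖B t (P (U t u))‖^2 - (∑ j, ‖B' j t (P (U t u))‖^2 + g t))
        volume 0 T :=
      (intervalIntegrable_iff_integrableOn_Icc_of_le hT).mpr hφ_int
    have hII_B' : ∀ j, IntervalIntegrable (fun t : ℝ => ‖B' j t (P (U t u))‖^2) volume 0 T :=
      fun j => (intervalIntegrable_iff_integrableOn_Icc_of_le hT).mpr (hB'_int j)
    have hII_g : IntervalIntegrable g volume 0 T :=
      (intervalIntegrable_iff_integrableOn_Icc_of_le hT).mpr hg_intT
    -- split the integral
    have hsplit : ∫ t in (0:ℝ)..T, ‖B t (P (U t u))‖^2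
        = (∫ t in (0:ℝ)..T,
            (‖B t (P (U t u))‖^2 - (∑ j, ‖B' j t (P (U t u))‖^2 + g t)))
          + ∫ t in (0:ℝ)..T, (∑ j, ‖B' j t (P (U t u))‖^2 + g t) := by
      rw [← intervalIntegral.integral_add hII_φ hII_sum]
      congr 1
      funext t
      ring
    -- bound on the B' j integrals
    have hbj : ∀ j, ∫ t in (0:ℝ)..T, ‖B' j t (P (U t u))‖^2 ≤ c j * ‖u‖^2 := by
      intro j
      rw [intervalIntegral.integral_of_le hT]
      have hInt : IntegrableOn (fun t : ℝ => ‖B' j t (P (U t u))‖^2) (Ioc 0 T) :=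
        (hB'_int j).mono_set Ioc_subset_Icc_self
      have h1 : ENNReal.ofReal (∫ t in Ioc (0:ℝ) T, ‖B' j t (P (U t u))‖^2)
          = ∫⁻ t in Ioc (0:ℝ) T, ENNReal.ofReal (‖B' j t (P (U t u))‖^2) :=
        ofReal_integral_eq_lintegral_ofReal hInt
          (Filter.Eventually.of_forall fun t => by positivity)
      have h2 : (∫⁻ t in Ioc (0:ℝ) T, ENNReal.ofReal (‖B' j t (P (U t u))‖^2))
          ≤ ∫⁻ t in Ioi (0:ℝ), ENNReal.ofReal (‖B' j t (P (U t u))‖^2) :=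
        lintegral_mono_set Ioc_subset_Ioi_self
      have h3 := hd u j
      have h4 : ENNReal.ofReal (∫ t in Ioc (0:ℝ) T, ‖B' j t (P (U t u))‖^2)
          ≤ ENNReal.ofReal (c j * ‖u‖^2) := by
        rw [h1]; exact le_trans h2 h3
      exact (ENNReal.ofReal_le_ofReal_iff (mul_nonneg (hc j) (sq_nonneg _))).mp h4
    -- bound on the g integral
    have hgle : ∫ t in (0:ℝ)..T, g t ≤ Cb^2*‖u‖^2 * (MK + CK * MR) := by
      rw [intervalIntegral.integral_of_le hT]
      have hsub : Ioc (0:ℝ) T ⊆ Ici 0 := fun x hx => hx.1.le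
      have hKD_le : ∫ t in Ioc (0:ℝ) T, ‖K.comp (D t)‖ ≤ MK := by
        rw [hMK_def]
        refine setIntegral_mono_set hKDint ?_ (HasSubset.Subset.eventuallyLE hsub)
        exact Filter.Eventually.of_forall fun t => norm_nonneg _
      have hR0_le : ∫ t in Ioc (0:ℝ) T, ‖R0 t‖ ≤ MR := by
        rw [hMR_def]
        refine setIntegral_mono_set hR0int ?_ (HasSubset.Subset.eventuallyLE hsub)
        exact Filter.Eventually.of_forall fun t => norm_nonneg _
      have hKD_nn : 0 ≤ ∫ t in Ioc (0:ℝ) T, ‖K.comp (D t)‖ :=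
        setIntegral_nonneg measurableSet_Ioc fun t _ => norm_nonneg _
      have hR0_nn : 0 ≤ ∫ t in Ioc (0:ℝ) T, ‖R0 t‖ :=
        setIntegral_nonneg measurableSet_Ioc fun t _ => norm_nonneg _
      have heq : ∫ t in Ioc (0:ℝ) T, g t
          = Cb^2*‖u‖^2 * (∫ t in Ioc (0:ℝ) T, ‖K.comp (D t)‖)
            + CK * (Cb^2*‖u‖^2) * (∫ t in Ioc (0:ℝ) T, ‖R0 t‖) := by
        have i1 : IntegrableOn (fun t : ℝ => Cb^2*‖u‖^2 * ‖K.comp (D t)‖) (Ioc 0 T) :=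
          (hKDint.mono_set hsub).const_mul (Cb^2*‖u‖^2)
        have i2 : IntegrableOn (fun t : ℝ => CK * (Cb^2*‖u‖^2) * ‖R0 t‖) (Ioc 0 T) :=
          (hR0int.mono_set hsub).const_mul (CK * (Cb^2*‖u‖^2))
        rw [hg_def]
        rw [integral_add i1 i2, integral_const_mul, integral_const_mul]
      have e1 : Cb^2*‖u‖^2 * (∫ t in Ioc (0:ℝ) T, ‖K.comp (D t)‖) ≤ Cb^2*‖u‖^2 * MK :=
        mul_le_mul_of_nonneg_left hKD_le (mul_nonneg (sq_nonneg Cb) (sq_nonneg _))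
      have e2 : CK * (Cb^2*‖u‖^2) * (∫ t in Ioc (0:ℝ) T, ‖R0 t‖)
          ≤ CK * (Cb^2*‖u‖^2) * MR :=
        mul_le_mul_of_nonneg_left hR0_le
          (mul_nonneg hCK0 (mul_nonneg (sq_nonneg Cb) (sq_nonneg _)))
      calc ∫ t in Ioc (0:ℝ) T, g t
          = Cb^2*‖u‖^2 * (∫ t in Ioc (0:ℝ) T, ‖K.comp (D t)‖)
            + CK * (Cb^2*‖u‖^2) * (∫ t in Ioc (0:ℝ) T, ‖R0 t‖) := heq
        _ ≤ Cb^2*‖u‖^2 * MK + CK * (Cb^2*‖u‖^2) * MR := add_le_add e1 e2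
        _ = Cb^2*‖u‖^2 * (MK + CK * MR) := by ring
    -- bound on F T - F 0
    have hFdiff : F T - F 0 ≤ 2*CK*CΦ*Cb^2*‖u‖^2 := by
      have h1 := hFb T hT
      have h2 := hFb 0 le_rfl
      have h3 := le_abs_self (F T)
      have h4 := neg_abs_le (F 0)
      linarith
    -- assemble
    have hsum_split : ∫ t in (0:ℝ)..T, (∑ j, ‖B' j t (P (U t u))‖^2 + g t)
        = (∑ j, ∫ t in (0:ℝ)..T, ‖B' j t (P (U t u))‖^2) + ∫ t in (0:ℝ)..T, g t := by
      have hsumII : IntervalIntegrable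
          (fun t : ℝ => ∑ j, ‖B' j t (P (U t u))‖^2) volume 0 T :=
        (intervalIntegrable_iff_integrableOn_Icc_of_le hT).mpr
          (integrable_finset_sum _ fun j _ => hB'_int j)
      rw [intervalIntegral.integral_add hsumII hII_g,
        intervalIntegral.integral_finset_sum fun j _ => hII_B' j]
    have hsum_le : (∑ j, ∫ t in (0:ℝ)..T, ‖B' j t (P (U t u))‖^2) ≤ (∑ j, c j) * ‖u‖^2 := by
      rw [Finset.sum_mul]
      exact Finset.sum_le_sum fun j _ => hbj j
    have hfinal : ∫ t in (0:ℝ)..T, ‖B t (P (U t u))‖^2 ≤ C0 * ‖u‖^2 := by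
      rw [hsplit, hsum_split]
      have step : (∫ t in (0:ℝ)..T,
            (‖B t (P (U t u))‖^2 - (∑ j, ‖B' j t (P (U t u))‖^2 + g t)))
          + ((∑ j, ∫ t in (0:ℝ)..T, ‖B' j t (P (U t u))‖^2) + ∫ t in (0:ℝ)..T, g t)
          ≤ 2*CK*CΦ*Cb^2*‖u‖^2 + ((∑ j, c j) * ‖u‖^2 + Cb^2*‖u‖^2 * (MK + CK * MR)) := by
        refine add_le_add (le_trans hFTC hFdiff) (add_le_add hsum_le hgle)
      refine le_trans step ?_
      rw [hC0_def]
      exact le_of_eq (by ring)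
    rw [intervalIntegral.integral_of_le hT] at hfinal
    exact hfinal
  -- pass to the limit: monotone convergence over Ioc 0 n
  have hboundn : ∀ n : ℕ,
      ∫⁻ t in Ioc (0:ℝ) (n:ℝ), ENNReal.ofReal (‖B t (P (U t u))‖^2)
        ≤ ENNReal.ofReal ((C0+1) * ‖u‖^2) := by
    intro n
    have hn0 : (0:ℝ) ≤ (n:ℝ) := Nat.cast_nonneg n
    have hInt : IntegrableOn (fun t : ℝ => ‖B t (P (U t u))‖^2) (Ioc 0 (n:ℝ)) :=
      ((hBc.mono Icc_subset_Ici_self).integrableOn_Icc).mono_set Ioc_subset_Icc_self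
    have h1 : ENNReal.ofReal (∫ t in Ioc (0:ℝ) (n:ℝ), ‖B t (P (U t u))‖^2)
        = ∫⁻ t in Ioc (0:ℝ) (n:ℝ), ENNReal.ofReal (‖B t (P (U t u))‖^2) :=
      ofReal_integral_eq_lintegral_ofReal hInt
        (Filter.Eventually.of_forall fun t => sq_nonneg _)
    rw [← h1]
    apply ENNReal.ofReal_le_ofReal
    calc ∫ t in Ioc (0:ℝ) (n:ℝ), ‖B t (P (U t u))‖^2 ≤ C0 * ‖u‖^2 := main (n:ℝ) hn0
      _ ≤ (C0+1) * ‖u‖^2 :=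
        mul_le_mul_of_nonneg_right (le_add_of_nonneg_right zero_le_one) (sq_nonneg _)
  have hmonoInd : ∀ x : ℝ, Monotone fun n : ℕ =>
      (Ioc (0:ℝ) (n:ℝ)).indicator (fun t => ENNReal.ofReal (‖B t (P (U t u))‖^2)) x := by
    intro x n m hnm
    exact Set.indicator_le_indicator_of_subset
      (Ioc_subset_Ioc_right (by exact_mod_cast hnm)) (fun a => zero_le) x
  have hmeasInd : ∀ n : ℕ, AEMeasurable
      ((Ioc (0:ℝ) (n:ℝ)).indicator (fun t => ENNReal.ofReal (‖B t (P (U t u))‖^2)))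
      volume := by
    intro n
    rw [aemeasurable_indicator_iff measurableSet_Ioc]
    have hcont : ContinuousOn (fun t : ℝ => ‖B t (P (U t u))‖^2) (Ioc (0:ℝ) (n:ℝ)) :=
      hBc.mono fun x hx => hx.1.le
    exact ENNReal.measurable_ofReal.comp_aemeasurable
      (hcont.aemeasurable measurableSet_Ioc)
  have hsupInd : ∀ x : ℝ,
      (⨆ n : ℕ, (Ioc (0:ℝ) (n:ℝ)).indicator
        (fun t => ENNReal.ofReal (‖B t (P (U t u))‖^2)) x)
      = (Ioi (0:ℝ)).indicator (fun t => ENNReal.ofReal (‖B t (P (U t u))‖^2)) x := by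
    intro x
    by_cases hx : 0 < x
    · obtain ⟨n, hn⟩ := exists_nat_ge x
      apply le_antisymm
      · refine iSup_le fun m => ?_
        by_cases hm : x ∈ Ioc (0:ℝ) (m:ℝ)
        · rw [Set.indicator_of_mem hm, Set.indicator_of_mem (mem_Ioi.2 hx)]
        · rw [Set.indicator_of_notMem hm]; exact zero_le
      · refine le_trans ?_ (le_iSup _ n)
        rw [Set.indicator_of_mem (mem_Ioi.2 hx),
          Set.indicator_of_mem (show x ∈ Ioc (0:ℝ) (n:ℝ) from ⟨hx, hn⟩)]
    · have hx' : x ∉ Ioi (0:ℝ) := hx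
      rw [Set.indicator_of_notMem hx']
      have hz : ∀ n : ℕ, (Ioc (0:ℝ) (n:ℝ)).indicator
          (fun t => ENNReal.ofReal (‖B t (P (U t u))‖^2)) x = 0 :=
        fun n => Set.indicator_of_notMem (fun h => hx h.1) _
      simp only [hz, iSup_const]
  calc ∫⁻ t in Ioi (0:ℝ), ENNReal.ofReal (‖B t (P (U t u))‖^2)
      = ∫⁻ t, (Ioi (0:ℝ)).indicator (fun s => ENNReal.ofReal (‖B s (P (U s u))‖^2)) t :=
        (lintegral_indicator measurableSet_Ioi _).symm
    _ = ∫⁻ t, ⨆ n : ℕ, (Ioc (0:ℝ) (n:ℝ)).indicator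
          (fun s => ENNReal.ofReal (‖B s (P (U s u))‖^2)) t :=
        lintegral_congr fun x => (hsupInd x).symm
    _ = ⨆ n : ℕ, ∫⁻ t, (Ioc (0:ℝ) (n:ℝ)).indicator
          (fun s => ENNReal.ofReal (‖B s (P (U s u))‖^2)) t :=
        lintegral_iSup' hmeasInd (Filter.Eventually.of_forall hmonoInd)
    _ = ⨆ n : ℕ, ∫⁻ t in Ioc (0:ℝ) (n:ℝ), ENNReal.ofReal (‖B t (P (U t u))‖^2) :=
        iSup_congr fun n => lintegral_indicator measurableSet_Ioc _
    _ ≤ ENNReal.ofReal ((C0+1) * ‖u‖^2) := iSup_le hboundn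
end

section
/- Existence of limits with integrable remainders (Corollary D.2(2)). Let D(t), R0(t), B_1(t), ..., B_N(t) be strongly continuous families of bounded operators on H for t ≥ 0 and c_1, ..., c_N ≥ 0, and assume: (a) for every u ∈ H the function f_u(t) := [P u_t, Φ(t) P u_t] is differentiable on [0,∞) with f_u'(t) = [P u_t, D(t) P u_t] + [P u_t, R0(t) P u_t]; (b) t ↦ ‖R0(t)‖ and t ↦ ‖K D(t)‖ are integrable on [0,∞); (c) |⟨w, D(t) w'⟩| ≤ Σ_{j=1}^{N} ‖B_j(t) w‖ · ‖B_j(t) w'‖ for all w, w' ∈ H; (d) ∫_0^∞ ‖B_j(t) P u_t‖² dt ≤ c_j ‖u‖² for every u ∈ H and every j. Then for every u ∈ H the limit lim_{t→+∞} [P u_t, Φ(t) P u_t] exists. -/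
open MeasureTheory Set Filter
open scoped ComplexInnerProductSpace Topology

/-- A strongly continuous family of operators applied to a continuous path is continuous. -/
lemma strongCont_apply_cont {H : Type*} [NormedAddCommGroup H] [InnerProductSpace ℂ H]
    [CompleteSpace H]
    (T : ℝ → H →L[ℂ] H) (hT : ∀ v : H, ContinuousOn (fun t : ℝ => T t v) (Ici 0))
    (w : ℝ → H) (hw : Continuous w) :
    ContinuousOn (fun t : ℝ => T t (w t)) (Ici 0) := by
  intro t₀ ht₀
  -- local uniform bound via Banach–Steinhaus on the compact set Icc 0 (t₀+1)
  have hcpt : IsCompact (Icc (0:ℝ) (t₀ + 1)) := isCompact_Icc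
  have hsub : Icc (0:ℝ) (t₀ + 1) ⊆ Ici 0 := fun x hx => hx.1
  have hbdd : ∃ C : ℝ, ∀ i : Icc (0:ℝ) (t₀ + 1), ‖T i‖ ≤ C := by
    apply banach_steinhaus (g := fun i : Icc (0:ℝ) (t₀ + 1) => T i)
    intro x
    obtain ⟨C, hC⟩ := hcpt.exists_bound_of_continuousOn ((hT x).mono hsub)
    exact ⟨C, fun i => hC i i.2⟩
  obtain ⟨C, hC⟩ := hbdd
  have hC0 : (0:ℝ) ≤ C := le_trans (norm_nonneg _) (hC ⟨t₀, ht₀, by linarith⟩)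
  rw [ContinuousWithinAt, tendsto_iff_norm_sub_tendsto_zero]
  have hev : ∀ᶠ t in 𝓝[Ici 0] t₀,
      ‖T t (w t) - T t₀ (w t₀)‖ ≤ C * ‖w t - w t₀‖ + ‖T t (w t₀) - T t₀ (w t₀)‖ := by
    have h1 : ∀ᶠ t in 𝓝[Ici 0] t₀, t ∈ Ici (0:ℝ) := eventually_mem_nhdsWithin
    have h2 : ∀ᶠ t in 𝓝[Ici 0] t₀, t < t₀ + 1 :=
      eventually_nhdsWithin_of_eventually_nhds (Filter.Tendsto.eventually_lt_const (by linarith)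
        tendsto_id)
    filter_upwards [h1, h2] with t ht1 ht2
    have htm : t ∈ Icc (0:ℝ) (t₀ + 1) := ⟨ht1, le_of_lt ht2⟩
    calc ‖T t (w t) - T t₀ (w t₀)‖
        ≤ ‖T t (w t) - T t (w t₀)‖ + ‖T t (w t₀) - T t₀ (w t₀)‖ := norm_sub_le_norm_sub_add_norm_sub _ _ _
      _ ≤ C * ‖w t - w t₀‖ + ‖T t (w t₀) - T t₀ (w t₀)‖ := by
          gcongr
          rw [← map_sub]
          exact le_trans ((T t).le_opNorm _) (by gcongr; exact hC ⟨t, htm⟩)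
  have hlim : Tendsto (fun t => C * ‖w t - w t₀‖ + ‖T t (w t₀) - T t₀ (w t₀)‖)
      (𝓝[Ici 0] t₀) (𝓝 0) := by
    have hw1 : Tendsto (fun t => C * ‖w t - w t₀‖) (𝓝[Ici 0] t₀) (𝓝 0) := by
      have h0 : Tendsto w (𝓝[Ici (0:ℝ)] t₀) (𝓝 (w t₀)) :=
        (hw.tendsto t₀).mono_left nhdsWithin_le_nhds
      have := (tendsto_iff_norm_sub_tendsto_zero.mp h0).const_mul C
      simpa using this
    have hw2 : Tendsto (fun t => ‖T t (w t₀) - T t₀ (w t₀)‖) (𝓝[Ici 0] t₀) (𝓝 0) :=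
      tendsto_iff_norm_sub_tendsto_zero.mp ((hT (w t₀)) t₀ ht₀)
    simpa using hw1.add hw2
  exact squeeze_zero' (.of_forall fun t => norm_nonneg _) hev hlim

/-- **Existence of limits with integrable remainders** (Corollary D.2(2)). -/
theorem limit_exists_integrable_remainder
    {H : Type*} [NormedAddCommGroup H] [InnerProductSpace ℂ H] [CompleteSpace H]
    (K : H →L[ℂ] H) (hK : IsSelfAdjoint K)
    (hKunit : IsUnit ((1 : H →L[ℂ] H) + K))
    (U : ℝ → H →L[ℂ] H) (hU0 : U 0 = 1)
    (hUgrp : ∀ s t : ℝ, U (s + t) = (U s).comp (U t))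
    (hUcont : ∀ u : H, Continuous fun t : ℝ => U t u)
    (hUkrein : ∀ (t : ℝ) (u v : H),
      ⟪U t u, ((1 : H →L[ℂ] H) + K) (U t v)⟫ = ⟪u, ((1 : H →L[ℂ] H) + K) v⟫)
    (P : H →L[ℂ] H) (hPU : ∀ t : ℝ, P.comp (U t) = (U t).comp P)
    (hUPbdd : ∃ Cb : ℝ, ∀ t : ℝ, 0 ≤ t → ‖(U t).comp P‖ ≤ Cb)
    (Φ : ℝ → H →L[ℂ] H)
    (hΦcont : ∀ u : H, ContinuousOn (fun t : ℝ => Φ t u) (Ici 0))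
    (hΦbdd : ∃ CΦ : ℝ, ∀ t : ℝ, 0 ≤ t → ‖Φ t‖ ≤ CΦ)
    (N : ℕ) (D R0 : ℝ → H →L[ℂ] H) (B' : Fin N → ℝ → H →L[ℂ] H)
    (hDcont : ∀ u : H, ContinuousOn (fun t : ℝ => D t u) (Ici 0))
    (hR0cont : ∀ u : H, ContinuousOn (fun t : ℝ => R0 t u) (Ici 0))
    (hB'cont : ∀ (j : Fin N) (u : H), ContinuousOn (fun t : ℝ => B' j t u) (Ici 0))
    (c : Fin N → ℝ) (hc : ∀ j, 0 ≤ c j)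
    -- (a) the Heisenberg derivative identity, with both terms in the Krein form
    (ha : ∀ u : H, ∀ t ∈ Ici (0:ℝ),
      HasDerivWithinAt
        (fun s : ℝ => ⟪P (U s u), ((1 : H →L[ℂ] H) + K) (Φ s (P (U s u)))⟫)
        (⟪P (U t u), ((1 : H →L[ℂ] H) + K) (D t (P (U t u)))⟫
          + ⟪P (U t u), ((1 : H →L[ℂ] H) + K) (R0 t (P (U t u)))⟫)
        (Ici 0) t)
    -- (b) integrability of the remainders
    (hR0int : IntegrableOn (fun t : ℝ => ‖R0 t‖) (Ici 0))
    (hKDint : IntegrableOn (fun t : ℝ => ‖K.comp (D t)‖) (Ici 0))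
    -- (c) sesquilinear bound for D(t)
    (hD : ∀ t ∈ Ici (0:ℝ), ∀ w w' : H,
      ‖⟪w, D t w'⟫‖ ≤ ∑ j : Fin N, ‖B' j t w‖ * ‖B' j t w'‖)
    -- (d) integral propagation estimates for the B_j
    (hd : ∀ (u : H) (j : Fin N),
      ∫⁻ t in Ioi (0:ℝ), ENNReal.ofReal (‖B' j t (P (U t u))‖ ^ 2)
        ≤ ENNReal.ofReal (c j * ‖u‖ ^ 2)) :
    ∀ u : H, ∃ l : ℂ,
      Tendsto (fun t : ℝ => ⟪P (U t u), ((1 : H →L[ℂ] H) + K) (Φ t (P (U t u)))⟫)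
        atTop (𝓝 l) := by
  
  intro u
  set w : ℝ → H := fun t => P (U t u) with hw_def
  have hwcont : Continuous w := P.continuous.comp (hUcont u)
  obtain ⟨Cb, hCb⟩ := hUPbdd
  set Cw : ℝ := Cb * ‖u‖ with hCw_def
  have hwb : ∀ t : ℝ, 0 ≤ t → ‖w t‖ ≤ Cw := by
    intro t ht
    have : w t = ((U t).comp P) u := by
      simp only [hw_def, ← hPU t, ContinuousLinearMap.comp_apply]
    rw [this]
    exact le_trans (((U t).comp P).le_opNorm u)
      (mul_le_mul_of_nonneg_right (hCb t ht) (norm_nonneg u))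
  have hCw0 : (0:ℝ) ≤ Cw := le_trans (norm_nonneg (w 0)) (hwb 0 le_rfl)
  set g : ℝ → ℂ := fun t =>
    ⟪w t, ((1 : H →L[ℂ] H) + K) (D t (w t))⟫ + ⟪w t, ((1 : H →L[ℂ] H) + K) (R0 t (w t))⟫
    with hg_def
  set f : ℝ → ℂ := fun t => ⟪w t, ((1 : H →L[ℂ] H) + K) (Φ t (w t))⟫ with hf_def
  have hfg : ∀ t ∈ Ici (0:ℝ), HasDerivWithinAt f (g t) (Ici 0) t := fun t ht => ha u t ht
  -- continuity of g on [0, ∞)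
  have hDwc : ContinuousOn (fun t : ℝ => D t (w t)) (Ici 0) :=
    strongCont_apply_cont D hDcont w hwcont
  have hRwc : ContinuousOn (fun t : ℝ => R0 t (w t)) (Ici 0) :=
    strongCont_apply_cont R0 hR0cont w hwcont
  have hgcont : ContinuousOn g (Ici 0) := by
    apply ContinuousOn.add
    · exact (hwcont.continuousOn).inner
        (((1 : H →L[ℂ] H) + K).continuous.comp_continuousOn hDwc)
    · exact (hwcont.continuousOn).inner
        (((1 : H →L[ℂ] H) + K).continuous.comp_continuousOn hRwc)
  have hgmeas : AEStronglyMeasurable g (volume.restrict (Ici 0)) :=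
    hgcont.aestronglyMeasurable measurableSet_Ici
  -- integrability of the pieces of the dominating function
  have hBint : ∀ j : Fin N, IntegrableOn (fun t : ℝ => ‖B' j t (w t)‖ ^ 2) (Ici 0) := by
    intro j
    have hcontj : ContinuousOn (fun t : ℝ => ‖B' j t (w t)‖ ^ 2) (Ici 0) :=
      ((strongCont_apply_cont (B' j) (hB'cont j) w hwcont).norm).pow 2
    rw [integrableOn_Ici_iff_integrableOn_Ioi]
    refine ⟨(hcontj.mono Ioi_subset_Ici_self).aestronglyMeasurable measurableSet_Ioi, ?_⟩
    rw [hasFiniteIntegral_iff_ofReal (.of_forall fun t => by positivity)]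
    exact lt_of_le_of_lt (hd u j) ENNReal.ofReal_lt_top
  set M : ℝ → ℝ := fun t => (∑ j : Fin N, ‖B' j t (w t)‖ ^ 2)
      + (‖K.comp (D t)‖ * Cw ^ 2 + ‖(1 : H →L[ℂ] H) + K‖ * ‖R0 t‖ * Cw ^ 2) with hM_def
  have hMint : IntegrableOn M (Ici 0) := by
    refine Integrable.add (integrable_finset_sum _ fun j _ => hBint j) ?_
    exact Integrable.add (Integrable.mul_const hKDint _)
      (Integrable.mul_const (Integrable.const_mul hR0int _) _)
  have hgbound : ∀ᵐ t ∂(volume.restrict (Ici (0:ℝ))), ‖g t‖ ≤ M t := by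
    rw [ae_restrict_iff' measurableSet_Ici]
    refine .of_forall fun t ht => ?_
    have h1 : ⟪w t, ((1 : H →L[ℂ] H) + K) (D t (w t))⟫
        = ⟪w t, D t (w t)⟫ + ⟪w t, K (D t (w t))⟫ := by
      rw [← inner_add_right]; simp [inner_add_right]
    have h2 : ‖⟪w t, D t (w t)⟫‖ ≤ ∑ j : Fin N, ‖B' j t (w t)‖ ^ 2 := by
      refine le_trans (hD t ht (w t) (w t)) (le_of_eq ?_)
      exact Finset.sum_congr rfl fun j _ => (sq (‖B' j t (w t)‖)).symm
    have h3 : ‖⟪w t, K (D t (w t))⟫‖ ≤ ‖K.comp (D t)‖ * Cw ^ 2 := by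
      have := norm_inner_le_norm (𝕜 := ℂ) (w t) (K (D t (w t)))
      have hKD : ‖K (D t (w t))‖ ≤ ‖K.comp (D t)‖ * ‖w t‖ := (K.comp (D t)).le_opNorm (w t)
      have hwt := hwb t ht
      calc ‖⟪w t, K (D t (w t))⟫‖ ≤ ‖w t‖ * ‖K (D t (w t))‖ := this
        _ ≤ Cw * (‖K.comp (D t)‖ * Cw) :=
            mul_le_mul hwt (hKD.trans (by gcongr)) (norm_nonneg _) hCw0
        _ = ‖K.comp (D t)‖ * Cw ^ 2 := by ring
    have h4 : ‖⟪w t, ((1 : H →L[ℂ] H) + K) (R0 t (w t))⟫‖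
        ≤ ‖(1 : H →L[ℂ] H) + K‖ * ‖R0 t‖ * Cw ^ 2 := by
      have hi := norm_inner_le_norm (𝕜 := ℂ) (w t) (((1 : H →L[ℂ] H) + K) (R0 t (w t)))
      have hK1 : ‖((1 : H →L[ℂ] H) + K) (R0 t (w t))‖
          ≤ ‖(1 : H →L[ℂ] H) + K‖ * (‖R0 t‖ * ‖w t‖) :=
        le_trans (((1 : H →L[ℂ] H) + K).le_opNorm _)
          (mul_le_mul_of_nonneg_left ((R0 t).le_opNorm _) (norm_nonneg _))
      have hwt := hwb t ht
      calc ‖⟪w t, ((1 : H →L[ℂ] H) + K) (R0 t (w t))⟫‖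
          ≤ ‖w t‖ * ‖((1 : H →L[ℂ] H) + K) (R0 t (w t))‖ := hi
        _ ≤ Cw * (‖(1 : H →L[ℂ] H) + K‖ * (‖R0 t‖ * Cw)) :=
            mul_le_mul hwt (hK1.trans (by gcongr)) (norm_nonneg _) hCw0
        _ = ‖(1 : H →L[ℂ] H) + K‖ * ‖R0 t‖ * Cw ^ 2 := by ring
    calc ‖g t‖ ≤ ‖⟪w t, ((1 : H →L[ℂ] H) + K) (D t (w t))⟫‖
          + ‖⟪w t, ((1 : H →L[ℂ] H) + K) (R0 t (w t))⟫‖ := norm_add_le _ _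
      _ ≤ (‖⟪w t, D t (w t)⟫‖ + ‖⟪w t, K (D t (w t))⟫‖)
          + ‖⟪w t, ((1 : H →L[ℂ] H) + K) (R0 t (w t))⟫‖ := by
            gcongr; rw [h1]; exact norm_add_le _ _
      _ ≤ M t := by
            have := h2; have := h3; have := h4
            simp only [hM_def]; linarith
  have hgint : IntegrableOn g (Ici 0) := hMint.mono' hgmeas hgbound
  have hgintIoi : IntegrableOn g (Ioi 0) := hgint.mono_set Ioi_subset_Ici_self
  -- FTC
  have key : ∀ b : ℝ, 0 ≤ b → f b = f 0 + ∫ s in (0:ℝ)..b, g s := by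
    intro b hb
    have := intervalIntegral.integral_eq_sub_of_hasDeriv_right_of_le hb
      (fun t ht => ((hfg t (Icc_subset_Ici_self ht)).continuousWithinAt).mono
        (Icc_subset_Ici_self))
      (fun x hx => (hfg x (le_of_lt hx.1)).mono fun y hy => le_of_lt (lt_trans hx.1 hy))
      ((intervalIntegrable_iff_integrableOn_Ioc_of_le hb).mpr
        (hgint.mono_set fun y hy => le_of_lt hy.1))
    rw [this]; ring
  refine ⟨f 0 + ∫ t in Ioi (0:ℝ), g t, ?_⟩
  have hlim : Tendsto (fun b : ℝ => f 0 + ∫ s in (0:ℝ)..b, g s) atTop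
      (𝓝 (f 0 + ∫ t in Ioi (0:ℝ), g t)) :=
    tendsto_const_nhds.add (intervalIntegral_tendsto_integral_Ioi 0 hgintIoi tendsto_id)
  exact hlim.congr' (by filter_upwards [eventually_ge_atTop (0:ℝ)] with b hb
    using (key b hb).symm)
end

section
/- Cook-type existence of strong limits, Hilbert-unitary target (Proposition D.3(1)). Assume: (a) for all u, v ∈ H the function g_{v,u}(t) := ⟨U0(t)v, P0 M(t) P1 U1(t) u⟩ is differentiable on [0,∞) with |g_{v,u}'(t)| ≤ Σ_{i=1}^{N} ‖B0_i(t) P0 U0(t) v‖ · ‖B1_i(t) P1 U1(t) u‖; (b) there is C > 0 such that ∫_0^∞ ‖B0_i(t) P0 U0(t) v‖² dt ≤ C ‖v‖² and ∫_0^∞ ‖B1_i(t) P1 U1(t) u‖² dt ≤ C ‖u‖² for all u, v ∈ H and all i. Then for every u ∈ H the vectors U0(t)^{-1} P0 M(t) P1 U1(t) u converge in the norm of H as t → +∞; that is, the strong limit s-lim_{t→+∞} U0(t)^{-1} P0 M(t) P1 U1(t) exists. -/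
open MeasureTheory Set Filter
open scoped ComplexInnerProductSpace Topology ENNReal

lemma clm_apply_continuousOn_aux {H : Type*} [NormedAddCommGroup H] [NormedSpace ℂ H]
    [CompleteSpace H]
    (A : ℝ → H →L[ℂ] H) (hA : ∀ x : H, ContinuousOn (fun t => A t x) (Ici (0:ℝ)))
    (x : ℝ → H) (hx : Continuous x) :
    ContinuousOn (fun t => A t (x t)) (Ici (0:ℝ)) := by
  intro t₀ ht₀
  obtain ⟨C, hC⟩ : ∃ C, ∀ s : Icc (0:ℝ) (t₀+1), ‖A s‖ ≤ C := by
    apply banach_steinhaus (g := fun s : Icc (0:ℝ) (t₀+1) => A s)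
    intro y
    obtain ⟨C, hC⟩ := (isCompact_Icc (a := (0:ℝ)) (b := t₀+1)).exists_bound_of_continuousOn
      ((hA y).mono (fun s hs => hs.1))
    exact ⟨C, fun s => hC s s.2⟩
  have h1 : Tendsto (fun t => A t (x t₀)) (𝓝[Ici 0] t₀) (𝓝 (A t₀ (x t₀))) := hA (x t₀) t₀ ht₀
  have h2 : Tendsto (fun t => A t (x t - x t₀)) (𝓝[Ici 0] t₀) (𝓝 0) := by
    have hev : ∀ᶠ t in 𝓝[Ici 0] t₀, ‖A t (x t - x t₀)‖ ≤ C * ‖x t - x t₀‖ := by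
      have hmem : ∀ᶠ t in 𝓝[Ici 0] t₀, t ∈ Icc (0:ℝ) (t₀+1) := by
        filter_upwards [eventually_nhdsWithin_of_eventually_nhds
          (eventually_le_nhds (by linarith : t₀ < t₀ + 1)), self_mem_nhdsWithin] with t h1 h2
        exact ⟨h2, h1⟩
      filter_upwards [hmem] with t ht
      calc ‖A t (x t - x t₀)‖ ≤ ‖A t‖ * ‖x t - x t₀‖ := (A t).le_opNorm _
        _ ≤ C * ‖x t - x t₀‖ := by
            have := hC ⟨t, ht⟩
            have h0 : (0:ℝ) ≤ ‖x t - x t₀‖ := norm_nonneg _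
            nlinarith [norm_nonneg (A t)]
    have hlim : Tendsto (fun t => C * ‖x t - x t₀‖) (𝓝[Ici 0] t₀) (𝓝 0) := by
      have : Tendsto (fun t => x t - x t₀) (𝓝[Ici 0] t₀) (𝓝 0) := by
        have := (hx.tendsto t₀).mono_left (nhdsWithin_le_nhds (s := Ici (0:ℝ)))
        simpa using (this.sub_const (x t₀))
      simpa using (this.norm.const_mul C)
    exact squeeze_zero_norm' hev hlim
  have := h2.add h1
  simp only [zero_add] at this
  refine this.congr (fun t => ?_)
  simp [map_sub]

lemma mvt_bound_aux {E : Type*} [NormedAddCommGroup E] [NormedSpace ℝ E]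
    {g : ℝ → E} {φ : ℝ → ℝ} (hφ : Continuous φ)
    (hd : ∀ t ∈ Ici (0:ℝ), ∃ d : E, HasDerivWithinAt g d (Ici 0) t ∧ ‖d‖ ≤ φ t)
    {s t : ℝ} (hs : 0 ≤ s) (hst : s ≤ t) :
    ‖g t - g s‖ ≤ ∫ x in s..t, φ x := by
  classical
  set f' : ℝ → E := fun τ => if h : τ ∈ Ici (0:ℝ) then (hd τ h).choose else 0 with hf'def
  have hderiv : ∀ τ ∈ Ici (0:ℝ), HasDerivWithinAt g (f' τ) (Ici 0) τ ∧ ‖f' τ‖ ≤ φ τ := by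
    intro τ hτ
    simp only [hf'def, dif_pos hτ]
    exact (hd τ hτ).choose_spec
  have hIcc : Icc s t ⊆ Ici (0:ℝ) := fun x hx => le_trans hs hx.1
  have hf : ContinuousOn (fun τ => g τ - g s) (Icc s t) := by
    intro τ hτ
    exact (((hderiv τ (hIcc hτ)).1.continuousWithinAt).mono hIcc).sub continuousWithinAt_const
  have hf' : ∀ x ∈ Ico s t, HasDerivWithinAt (fun τ => g τ - g s) (f' x) (Ici x) x := by
    intro x hx
    have h0 : x ∈ Ici (0:ℝ) := le_trans hs hx.1
    exact HasDerivWithinAt.sub_const (g s) (((hderiv x h0).1).mono (fun y hy => mem_Ici.2 (le_trans (mem_Ici.1 h0) (mem_Ici.1 hy))))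
  have hB : ∀ x, HasDerivAt (fun τ => ∫ y in s..τ, φ y) (φ x) x := fun x =>
    (hφ.integral_hasStrictDerivAt s x).hasDerivAt
  have key := image_norm_le_of_norm_deriv_right_le_deriv_boundary hf hf'
    (B := fun τ => ∫ y in s..τ, φ y) (B' := φ)
    (by simp) hB (fun x hx => (hderiv x (le_trans hs hx.1)).2)
  simpa using key ⟨hst, le_refl t⟩

lemma cs_aux {a b : ℝ → ℝ} (hma : Continuous a) (hmb : Continuous b)
    (h0a : ∀ x, 0 ≤ a x) (h0b : ∀ x, 0 ≤ b x) {s t : ℝ} (hst : s ≤ t)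
    {I1 I2 : ℝ≥0∞} (hI1 : ∫⁻ x in Ioc s t, ENNReal.ofReal (a x ^ 2) ≤ I1)
    (hI2 : ∫⁻ x in Ioc s t, ENNReal.ofReal (b x ^ 2) ≤ I2) (h1 : I1 ≠ ∞) (h2 : I2 ≠ ∞) :
    ∫ x in s..t, a x * b x ≤ Real.sqrt I1.toReal * Real.sqrt I2.toReal := by
  rw [intervalIntegral.integral_of_le hst]
  set μ := volume.restrict (Ioc s t)
  rw [MeasureTheory.integral_eq_lintegral_of_nonneg_ae
    (ae_of_all _ (fun x => mul_nonneg (h0a x) (h0b x)))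
    ((hma.mul hmb).aestronglyMeasurable)]
  have hsq : ∀ (c : ℝ → ℝ), (∀ x, 0 ≤ c x) →
      (fun x => ENNReal.ofReal (c x) ^ (2:ℝ)) = fun x => ENNReal.ofReal (c x ^ 2) := by
    intro c hc
    funext x
    rw [ENNReal.ofReal_pow (hc x), ← ENNReal.rpow_natCast]
    norm_num
  have hconj : Real.HolderConjugate 2 2 := Real.HolderConjugate.two_two
  have hH := ENNReal.lintegral_mul_le_Lp_mul_Lq μ hconj
    (f := fun x => ENNReal.ofReal (a x)) (g := fun x => ENNReal.ofReal (b x))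
    (measurable_id.ennreal_ofReal.comp hma.measurable).aemeasurable
    (measurable_id.ennreal_ofReal.comp hmb.measurable).aemeasurable
  rw [hsq a h0a, hsq b h0b] at hH
  have heq : ∫⁻ x, ENNReal.ofReal (a x * b x) ∂μ
      = ∫⁻ x, (fun x => ENNReal.ofReal (a x)) x * (fun x => ENNReal.ofReal (b x)) x ∂μ := by
    simp only [← ENNReal.ofReal_mul (h0a _)]
  rw [heq]
  calc (∫⁻ x, (fun x => ENNReal.ofReal (a x)) x * (fun x => ENNReal.ofReal (b x)) x ∂μ).toReal
      ≤ ((∫⁻ x, ENNReal.ofReal (a x ^ 2) ∂μ) ^ (1/(2:ℝ))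
        * (∫⁻ x, ENNReal.ofReal (b x ^ 2) ∂μ) ^ (1/(2:ℝ))).toReal := by
        apply ENNReal.toReal_mono
        · exact ENNReal.mul_ne_top (ENNReal.rpow_ne_top_of_nonneg (by norm_num)
            (ne_top_of_le_ne_top h1 hI1)) (ENNReal.rpow_ne_top_of_nonneg (by norm_num)
            (ne_top_of_le_ne_top h2 hI2))
        · exact hH
    _ ≤ (I1 ^ (1/(2:ℝ)) * I2 ^ (1/(2:ℝ))).toReal := by
        apply ENNReal.toReal_mono
        · exact ENNReal.mul_ne_top (ENNReal.rpow_ne_top_of_nonneg (by norm_num) h1)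
            (ENNReal.rpow_ne_top_of_nonneg (by norm_num) h2)
        · exact mul_le_mul' (ENNReal.rpow_le_rpow hI1 (by norm_num))
            (ENNReal.rpow_le_rpow hI2 (by norm_num))
    _ = Real.sqrt I1.toReal * Real.sqrt I2.toReal := by
        rw [ENNReal.toReal_mul, ← ENNReal.toReal_rpow, ← ENNReal.toReal_rpow,
          Real.sqrt_eq_rpow, Real.sqrt_eq_rpow]

lemma tail_aux {h : ℝ → ENNReal} (hfin : (∫⁻ x in Ioi (0:ℝ), h x) ≠ ∞) :
    Tendsto (fun s : ℝ => ∫⁻ x in Ioi s, h x) atTop (𝓝 0) := by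
  set ν := volume.withDensity h with hν
  have happ : ∀ s : ℝ, ν (Ioi s) = ∫⁻ x in Ioi s, h x := fun s =>
    withDensity_apply h measurableSet_Ioi
  have hseq : Tendsto (fun n : ℕ => ν (Ioi (n:ℝ))) atTop (𝓝 0) := by
    have hiInter : (⋂ n : ℕ, Ioi (n:ℝ)) = ∅ := by
      ext x
      simp only [mem_iInter, mem_Ioi, mem_empty_iff_false, iff_false, not_forall, not_lt]
      obtain ⟨n, hn⟩ := exists_nat_gt x
      exact ⟨n, hn.le⟩
    have := tendsto_measure_iInter_atTop (μ := ν) (s := fun n : ℕ => Ioi (n:ℝ))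
      (fun n => measurableSet_Ioi.nullMeasurableSet)
      (fun m n hmn => Ioi_subset_Ioi (by exact_mod_cast hmn))
      ⟨0, by rw [happ]; simpa using hfin⟩
    rw [hiInter] at this
    simpa [Function.comp_def] using this
  have hcomp : Tendsto (fun s : ℝ => ν (Ioi (⌊s⌋₊ : ℝ))) atTop (𝓝 0) :=
    hseq.comp (tendsto_nat_floor_atTop)
  have : Tendsto (fun s : ℝ => ν (Ioi s)) atTop (𝓝 0) := by
    refine tendsto_of_tendsto_of_tendsto_of_le_of_le' tendsto_const_nhds hcomp
      (Eventually.of_forall (fun s => zero_le)) ?_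
    filter_upwards [eventually_ge_atTop (0:ℝ)] with s hs
    exact measure_mono (Ioi_subset_Ioi (Nat.floor_le hs))
  simpa only [happ] using this

/-- **Cook-type existence of strong limits, Hilbert-unitary target** (Proposition D.3(1)). -/
theorem cook_argument_hilbert_target
    {H : Type*} [NormedAddCommGroup H] [InnerProductSpace ℂ H] [CompleteSpace H]
    (U0 U1 : ℝ → H →L[ℂ] H)
    -- U0 : strongly continuous unitary group
    (hU00 : U0 0 = 1) (hU0grp : ∀ s t : ℝ, U0 (s + t) = (U0 s).comp (U0 t))
    (hU0cont : ∀ u : H, Continuous fun t : ℝ => U0 t u)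
    (hU0unitary : ∀ (t : ℝ) (u v : H), ⟪U0 t u, U0 t v⟫ = ⟪u, v⟫)
    -- U1 : strongly continuous group of bounded (invertible) operators
    (hU10 : U1 0 = 1) (hU1grp : ∀ s t : ℝ, U1 (s + t) = (U1 s).comp (U1 t))
    (hU1cont : ∀ u : H, Continuous fun t : ℝ => U1 t u)
    (P0 P1 : H →L[ℂ] H)
    (hP0 : ∀ t : ℝ, P0.comp (U0 t) = (U0 t).comp P0)
    (hP1 : ∀ t : ℝ, P1.comp (U1 t) = (U1 t).comp P1)
    (M : ℝ → H →L[ℂ] H)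
    (hMcont : ∀ u : H, ContinuousOn (fun t : ℝ => M t u) (Ici 0))
    (N : ℕ) (B0 B1 : Fin N → ℝ → H →L[ℂ] H)
    (hB0cont : ∀ (i : Fin N) (u : H), ContinuousOn (fun t : ℝ => B0 i t u) (Ici 0))
    (hB1cont : ∀ (i : Fin N) (u : H), ContinuousOn (fun t : ℝ => B1 i t u) (Ici 0))
    -- (a) differentiability and bound on the derivative
    (ha : ∀ u v : H, ∀ t ∈ Ici (0:ℝ), ∃ d : ℂ,
      HasDerivWithinAt (fun s : ℝ => ⟪U0 s v, P0 (M s (P1 (U1 s u)))⟫) d (Ici 0) t ∧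
      ‖d‖ ≤ ∑ i : Fin N, ‖B0 i t (P0 (U0 t v))‖ * ‖B1 i t (P1 (U1 t u))‖)
    -- (b) integral propagation estimates
    (Cc : ℝ) (hCc : 0 < Cc)
    (hb0 : ∀ (v : H) (i : Fin N),
      ∫⁻ t in Ioi (0:ℝ), ENNReal.ofReal (‖B0 i t (P0 (U0 t v))‖ ^ 2)
        ≤ ENNReal.ofReal (Cc * ‖v‖ ^ 2))
    (hb1 : ∀ (u : H) (i : Fin N),
      ∫⁻ t in Ioi (0:ℝ), ENNReal.ofReal (‖B1 i t (P1 (U1 t u))‖ ^ 2)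
        ≤ ENNReal.ofReal (Cc * ‖u‖ ^ 2)) :
    ∀ u : H, ∃ w : H,
      Tendsto (fun t : ℝ => U0 (-t) (P0 (M t (P1 (U1 t u))))) atTop (𝓝 w) := by
  intro u
  -- the moving vector and the candidate Cauchy family
  set f : ℝ → H := fun t => U0 (-t) (P0 (M t (P1 (U1 t u)))) with hfdef
  -- extended (continuous on all of ℝ) norm functions
  set av : Fin N → H → ℝ → ℝ :=
    fun i v τ => ‖B0 i (max τ 0) (P0 (U0 (max τ 0) v))‖ with havdef
  set bv : Fin N → ℝ → ℝ :=
    fun i τ => ‖B1 i (max τ 0) (P1 (U1 (max τ 0) u))‖ with hbvdef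
  have hmax : Continuous (fun τ : ℝ => max τ 0) := continuous_id.max continuous_const
  have hmaxmem : ∀ τ : ℝ, max τ 0 ∈ Ici (0:ℝ) := fun τ => le_max_right τ 0
  have hacont : ∀ i v, Continuous (av i v) := by
    intro i v
    have h1 : ContinuousOn (fun t : ℝ => B0 i t (P0 (U0 t v))) (Ici 0) :=
      clm_apply_continuousOn_aux (B0 i) (hB0cont i)
        (fun t => P0 (U0 t v)) (P0.continuous.comp (hU0cont v))
    exact (h1.comp_continuous hmax hmaxmem).norm
  have hbcont : ∀ i, Continuous (bv i) := by
    intro i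
    have h1 : ContinuousOn (fun t : ℝ => B1 i t (P1 (U1 t u))) (Ici 0) :=
      clm_apply_continuousOn_aux (B1 i) (hB1cont i)
        (fun t => P1 (U1 t u)) (P1.continuous.comp (hU1cont u))
    exact (h1.comp_continuous hmax hmaxmem).norm
  have ha0 : ∀ i v τ, 0 ≤ av i v τ := fun i v τ => norm_nonneg _
  have hb0' : ∀ i τ, 0 ≤ bv i τ := fun i τ => norm_nonneg _
  -- tails
  set tail : Fin N → ℝ → ENNReal :=
    fun i s => ∫⁻ τ in Ioi s, ENNReal.ofReal (bv i τ ^ 2) with htaildef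
  have htail0 : ∀ i s, 0 ≤ s → tail i s ≤ ENNReal.ofReal (Cc * ‖u‖ ^ 2) := by
    intro i s hs
    calc tail i s ≤ ∫⁻ τ in Ioi (0:ℝ), ENNReal.ofReal (bv i τ ^ 2) :=
          lintegral_mono_set (Ioi_subset_Ioi hs)
      _ = ∫⁻ τ in Ioi (0:ℝ), ENNReal.ofReal (‖B1 i τ (P1 (U1 τ u))‖ ^ 2) := by
          refine setLIntegral_congr_fun measurableSet_Ioi (fun τ hτ => ?_)
          simp only [hbvdef, max_eq_left (le_of_lt (mem_Ioi.1 hτ))]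
      _ ≤ ENNReal.ofReal (Cc * ‖u‖ ^ 2) := hb1 u i
  have htailfin : ∀ i s, 0 ≤ s → tail i s ≠ ∞ := fun i s hs =>
    ne_top_of_le_ne_top ENNReal.ofReal_ne_top (htail0 i s hs)
  -- key pairing estimate
  have hkey : ∀ (v : H) (s t : ℝ), 0 ≤ s → s ≤ t →
      ‖(⟪v, f t⟫ : ℂ) - ⟪v, f s⟫‖ ≤
        Real.sqrt (Cc * ‖v‖ ^ 2) * ∑ i : Fin N, Real.sqrt ((tail i s).toReal) := by
    intro v s t hs hst
    -- inner products through the unitary group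
    have hfinner : ∀ τ : ℝ, (⟪v, f τ⟫ : ℂ) = ⟪U0 τ v, P0 (M τ (P1 (U1 τ u)))⟫ := by
      intro τ
      have hcomp : U0 τ (U0 (-τ) (P0 (M τ (P1 (U1 τ u))))) = P0 (M τ (P1 (U1 τ u))) := by
        have h1 := congrArg (fun L : H →L[ℂ] H => L (P0 (M τ (P1 (U1 τ u)))))
          (hU0grp τ (-τ)).symm
        simpa [add_neg_cancel, hU00] using h1
      rw [← hU0unitary τ v (U0 (-τ) (P0 (M τ (P1 (U1 τ u)))))]
      rw [hcomp]
    have hderiv : ∀ τ ∈ Ici (0:ℝ), ∃ d : ℂ,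
        HasDerivWithinAt (fun σ : ℝ => (⟪U0 σ v, P0 (M σ (P1 (U1 σ u)))⟫ : ℂ)) d (Ici 0) τ ∧
        ‖d‖ ≤ ∑ i : Fin N, av i v τ * bv i τ := by
      intro τ hτ
      obtain ⟨d, hd1, hd2⟩ := ha u v τ hτ
      refine ⟨d, hd1, hd2.trans (le_of_eq ?_)⟩
      refine Finset.sum_congr rfl (fun i _ => ?_)
      simp only [havdef, hbvdef, max_eq_left (mem_Ici.1 hτ)]
    have hφcont : Continuous (fun τ => ∑ i : Fin N, av i v τ * bv i τ) :=
      continuous_finset_sum _ (fun i _ => (hacont i v).mul (hbcont i))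
    have step1 :
        ‖(⟪U0 t v, P0 (M t (P1 (U1 t u)))⟫ : ℂ) - ⟪U0 s v, P0 (M s (P1 (U1 s u)))⟫‖
          ≤ ∫ x in s..t, ∑ i : Fin N, av i v x * bv i x :=
      mvt_bound_aux hφcont hderiv hs hst
    have step2 : (∫ x in s..t, ∑ i : Fin N, av i v x * bv i x)
        = ∑ i : Fin N, ∫ x in s..t, av i v x * bv i x := by
      apply intervalIntegral.integral_finset_sum
      intro i _
      exact ((hacont i v).mul (hbcont i)).intervalIntegrable s t
    have step3 : ∀ i : Fin N, (∫ x in s..t, av i v x * bv i x)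
        ≤ Real.sqrt (Cc * ‖v‖ ^ 2) * Real.sqrt ((tail i s).toReal) := by
      intro i
      have hI1 : ∫⁻ x in Ioc s t, ENNReal.ofReal (av i v x ^ 2)
          ≤ ENNReal.ofReal (Cc * ‖v‖ ^ 2) := by
        calc ∫⁻ x in Ioc s t, ENNReal.ofReal (av i v x ^ 2)
            ≤ ∫⁻ x in Ioi (0:ℝ), ENNReal.ofReal (av i v x ^ 2) := by
              apply lintegral_mono_set
              intro x hx
              exact lt_of_le_of_lt hs hx.1
          _ = ∫⁻ x in Ioi (0:ℝ), ENNReal.ofReal (‖B0 i x (P0 (U0 x v))‖ ^ 2) := by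
              refine setLIntegral_congr_fun measurableSet_Ioi (fun τ hτ => ?_)
              simp only [havdef, max_eq_left (le_of_lt (mem_Ioi.1 hτ))]
          _ ≤ ENNReal.ofReal (Cc * ‖v‖ ^ 2) := hb0 v i
      have hI2 : ∫⁻ x in Ioc s t, ENNReal.ofReal (bv i x ^ 2) ≤ tail i s :=
        lintegral_mono_set Ioc_subset_Ioi_self
      have := cs_aux (hacont i v) (hbcont i) (ha0 i v) (hb0' i) hst hI1 hI2
        ENNReal.ofReal_ne_top (htailfin i s hs)
      rwa [ENNReal.toReal_ofReal (by positivity)] at this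
    calc ‖(⟪v, f t⟫ : ℂ) - ⟪v, f s⟫‖
        = ‖(⟪U0 t v, P0 (M t (P1 (U1 t u)))⟫ : ℂ) - ⟪U0 s v, P0 (M s (P1 (U1 s u)))⟫‖ := by
          rw [hfinner t, hfinner s]
      _ ≤ ∫ x in s..t, ∑ i : Fin N, av i v x * bv i x := step1
      _ = ∑ i : Fin N, ∫ x in s..t, av i v x * bv i x := step2
      _ ≤ ∑ i : Fin N, Real.sqrt (Cc * ‖v‖ ^ 2) * Real.sqrt ((tail i s).toReal) :=
          Finset.sum_le_sum (fun i _ => step3 i)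
      _ = Real.sqrt (Cc * ‖v‖ ^ 2) * ∑ i : Fin N, Real.sqrt ((tail i s).toReal) := by
          rw [Finset.mul_sum]
  -- the norm estimate
  set R : ℝ → ℝ := fun s => ∑ i : Fin N, Real.sqrt ((tail i s).toReal) with hRdef
  have hRnonneg : ∀ s, 0 ≤ R s := fun s =>
    Finset.sum_nonneg (fun i _ => Real.sqrt_nonneg _)
  have hnorm : ∀ s t : ℝ, 0 ≤ s → s ≤ t → ‖f t - f s‖ ≤ Real.sqrt Cc * R s := by
    intro s t hs hst
    set x := f t - f s with hxdef
    have h1 : (⟪x, x⟫ : ℂ) = ⟪x, f t⟫ - ⟪x, f s⟫ := by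
      rw [hxdef, inner_sub_right]
    have h2 : ‖x‖ ^ 2 ≤ Real.sqrt (Cc * ‖x‖ ^ 2) * R s := by
      have h3 : (‖x‖ : ℝ) ^ 2 = ‖(⟪x, x⟫ : ℂ)‖ := by
        rw [inner_self_eq_norm_sq_to_K (𝕜 := ℂ)]
        rw [norm_pow]
        simp
      calc ‖x‖ ^ 2 = ‖(⟪x, x⟫ : ℂ)‖ := h3
        _ = ‖(⟪x, f t⟫ : ℂ) - ⟪x, f s⟫‖ := by rw [h1]
        _ ≤ Real.sqrt (Cc * ‖x‖ ^ 2) * ∑ i : Fin N, Real.sqrt ((tail i s).toReal) :=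
            hkey x s t hs hst
        _ = Real.sqrt (Cc * ‖x‖ ^ 2) * R s := rfl
    have h4 : Real.sqrt (Cc * ‖x‖ ^ 2) = Real.sqrt Cc * ‖x‖ := by
      rw [Real.sqrt_mul hCc.le, Real.sqrt_sq (norm_nonneg x)]
    rw [h4] at h2
    rcases eq_or_lt_of_le (norm_nonneg x) with h5 | h5
    · rw [← h5]
      positivity
    · nlinarith [Real.sqrt_nonneg Cc, hRnonneg s]
  -- R tends to 0
  have hRlim : Tendsto R atTop (𝓝 0) := by
    have hterm : ∀ i : Fin N, Tendsto (fun s => Real.sqrt ((tail i s).toReal)) atTop (𝓝 0) := by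
      intro i
      have htl : Tendsto (fun s => tail i s) atTop (𝓝 0) := by
        apply tail_aux
        exact ne_top_of_le_ne_top ENNReal.ofReal_ne_top (htail0 i 0 le_rfl)
      have htr : Tendsto (fun s => (tail i s).toReal) atTop (𝓝 0) := by
        have := (ENNReal.tendsto_toReal (by simp : (0:ENNReal) ≠ ∞)).comp htl
        simpa [Function.comp_def] using this
      have := (Real.continuous_sqrt.tendsto 0).comp htr
      simpa [Function.comp_def] using this
    have := tendsto_finset_sum Finset.univ (fun i (_ : i ∈ Finset.univ) => hterm i)
    simpa using this
  -- Cauchy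
  have hcauchy : CauchySeq f := by
    rw [Metric.cauchySeq_iff]
    intro ε hε
    have hev : ∀ᶠ s in atTop, Real.sqrt Cc * R s < ε := by
      have : Tendsto (fun s => Real.sqrt Cc * R s) atTop (𝓝 (Real.sqrt Cc * 0)) :=
        hRlim.const_mul _
      rw [mul_zero] at this
      exact this.eventually (gt_mem_nhds hε)
    obtain ⟨T, hT⟩ := (hev.and (eventually_ge_atTop (0:ℝ))).exists_forall_of_atTop
    refine ⟨T, fun m hm n hn => ?_⟩
    rcases le_total m n with h | h
    · rw [dist_comm, dist_eq_norm]
      exact lt_of_le_of_lt (hnorm m n (hT m hm).2 h) (hT m hm).1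
    · rw [dist_eq_norm]
      exact lt_of_le_of_lt (hnorm n m (hT n hn).2 h) (hT n hn).1
  obtain ⟨w, hw⟩ := cauchySeq_tendsto_of_complete hcauchy
  exact ⟨w, hw⟩
end

section
/- Positivity, strict positivity and uniform positivity coincide on Krein subspaces (Proposition A.5). Let K1 be a Krein subspace of H. Then the following are equivalent: (i) K1 is positive, i.e. [u,u] ≥ 0 for all u ∈ K1; (ii) K1 is strictly positive, i.e. [u,u] > 0 for all u ∈ K1 with u ≠ 0; (iii) K1 is uniformly strictly positive, i.e. there exists c > 0 such that [u,u] ≥ c‖u‖² for all u ∈ K1. -/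
open scoped ComplexInnerProductSpace

variable {H : Type*} [NormedAddCommGroup H] [InnerProductSpace ℂ H] [CompleteSpace H]

/-- A subspace `K1` of the Krein space `(H, [u,v] = ⟪u, M v⟫)` is a *Krein subspace* if it is
closed and the restricted form is non-degenerate in the Riesz sense: every continuous linear
functional on `K1` is represented by a unique vector of `K1` via the Krein form. -/
def IsKreinSubspace (M : H →L[ℂ] H) (K1 : Submodule ℂ H) : Prop :=
  IsClosed (K1 : Set H) ∧
    ∀ w : K1 →L[ℂ] ℂ, ∃! u : K1, ∀ v : K1, ⟪(u : H), M (v : H)⟫ = w v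


lemma krein_key (M : H →L[ℂ] H) (hM : IsSelfAdjoint M)
    (K1 : Submodule ℂ H) (hK1 : IsKreinSubspace M K1)
    (hpos : ∀ u ∈ K1, 0 ≤ (⟪u, M u⟫).re) :
    ∃ c : ℝ, 0 < c ∧ ∀ u ∈ K1, c * ‖u‖ ^ 2 ≤ (⟪u, M u⟫).re := by
  obtain ⟨hcl, hriesz⟩ := hK1
  haveI : CompleteSpace K1 := hcl.completeSpace_coe
  have hMsa : ∀ x y : H, ⟪M x, y⟫ = ⟪x, M y⟫ := by
    intro x y
    rw [← ContinuousLinearMap.adjoint_inner_left, ContinuousLinearMap.isSelfAdjoint_iff'.mp hM]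
  set A : K1 →L[ℂ] K1 := (Submodule.orthogonalProjectionOnto K1).comp (M.comp K1.subtypeL) with hAdef
  have hAr : ∀ u v : K1, ⟪u, A v⟫ = ⟪(u : H), M (v : H)⟫ := by
    intro u v
    simp [hAdef]
  have hAl : ∀ u v : K1, ⟪A u, v⟫ = ⟪(u : H), M (v : H)⟫ := by
    intro u v
    have : (starRingEnd ℂ) ⟪v, A u⟫ = (starRingEnd ℂ) ⟪(v : H), M (u : H)⟫ := by rw [hAr]
    rw [inner_conj_symm, inner_conj_symm] at this
    rw [this, hMsa]
  have hsym : ∀ x y : K1, ⟪x, A y⟫ = ⟪A x, y⟫ := fun x y => (hAr x y).trans (hAl x y).symm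
  have hinj : ∀ u : K1, A u = 0 → u = 0 := by
    intro u hu
    obtain ⟨w, hw, huniq⟩ := hriesz 0
    have h1 : u = w := huniq u (by
      intro v
      rw [← hAl, hu]
      simp)
    have h2 : (0 : K1) = w := huniq 0 (by intro v; simp)
    rw [h1, ← h2]
  have hsurj : Function.Surjective A := by
    intro y
    obtain ⟨u, hu, -⟩ := hriesz (innerSL ℂ y)
    refine ⟨u, ?_⟩
    apply ext_inner_right ℂ
    intro v
    rw [hAl u v, hu v]
    simp
  set e := ContinuousLinearEquiv.ofBijective A
    (LinearMap.ker_eq_bot'.mpr hinj) (LinearMap.range_eq_top.mpr hsurj) with hedef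
  set D : ℝ := ‖(e.symm : K1 →L[ℂ] K1)‖ with hDdef
  set N : ℝ := ‖A‖ with hNdef
  have hD0 : 0 ≤ D := hDdef ▸ ContinuousLinearMap.opNorm_nonneg _
  have hN0 : 0 ≤ N := hNdef ▸ ContinuousLinearMap.opNorm_nonneg _
  have hD : ∀ u : K1, ‖u‖ ≤ D * ‖A u‖ := by
    intro u
    have h1 : e.symm (A u) = u := by
      have : A u = e u := rfl
      rw [this, e.symm_apply_apply]
    calc ‖u‖ = ‖e.symm (A u)‖ := by rw [h1]
      _ ≤ D * ‖A u‖ := (e.symm : K1 →L[ℂ] K1).le_opNorm (A u)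
  have hposA : ∀ x : K1, 0 ≤ (⟪x, A x⟫).re := fun x => by rw [hAr]; exact hpos x x.2
  -- key inequality : ‖A x‖ ^ 2 * ‖A x‖ ^ 2 ≤ N * (⟪x, A x⟫).re * ‖A x‖ ^ 2
  have hkey : ∀ x : K1, ‖x‖ ^ 2 ≤ (D ^ 2 * N + 1) * (⟪x, A x⟫).re := by
    intro x
    have ha0 : 0 ≤ (⟪x, A x⟫).re := hposA x
    have hquad : ∀ t : ℝ,
        0 ≤ (⟪A x, A (A x)⟫).re * (t * t) + (2 * ‖A x‖ ^ 2) * t + (⟪x, A x⟫).re := by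
      intro t
      have h0 : (0:ℝ) ≤ (⟪x + (t:ℂ) • A x, A (x + (t:ℂ) • A x)⟫).re := hposA _
      have hexp : ⟪x + (t:ℂ) • A x, A (x + (t:ℂ) • A x)⟫
          = ⟪x, A x⟫ + (t:ℂ) * ⟪A x, A x⟫ + (t:ℂ) * ⟪A x, A x⟫
            + (t:ℂ) * ((t:ℂ) * ⟪A x, A (A x)⟫) := by
        rw [map_add, map_smul]
        simp only [inner_add_left, inner_add_right, inner_smul_left, inner_smul_right,
          Complex.conj_ofReal, hsym x (A x)]
        ring
      rw [hexp] at h0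
      simp only [Complex.add_re, Complex.re_ofReal_mul, inner_self_eq_norm_sq_to_K,
        show ∀ r : ℝ, (RCLike.ofReal r : ℂ) = Complex.ofReal r from fun r => rfl,
        ← Complex.ofReal_pow, Complex.ofReal_re] at h0
      nlinarith [h0]
    have hdisc := discrim_le_zero hquad
    rw [discrim] at hdisc
    have hc2 : (⟪A x, A (A x)⟫).re ≤ N * ‖A x‖ ^ 2 := by
      calc (⟪A x, A (A x)⟫).re ≤ ‖A x‖ * ‖A (A x)‖ := by
            simpa using re_inner_le_norm (𝕜 := ℂ) (A x) (A (A x))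
        _ ≤ ‖A x‖ * (N * ‖A x‖) := by
            have := A.le_opNorm (A x)
            have h' : ‖A (A x)‖ ≤ N * ‖A x‖ := by rw [hNdef]; exact this
            exact mul_le_mul_of_nonneg_left h' (norm_nonneg _)
        _ = N * ‖A x‖ ^ 2 := by ring
    have hDx : ‖x‖ ≤ D * ‖A x‖ := hD x
    rcases eq_or_lt_of_le (norm_nonneg (A x)) with hb | hb
    · have hx0 : ‖x‖ = 0 := le_antisymm (by simpa [← hb] using hDx) (norm_nonneg x)
      rw [hx0]
      have : (0:ℝ) ≤ (D ^ 2 * N + 1) * (⟪x, A x⟫).re :=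
        mul_nonneg (by positivity) ha0
      simpa using this
    · have h1 : ‖A x‖ ^ 2 ≤ N * (⟪x, A x⟫).re := by
        nlinarith [hdisc, hc2, ha0, hb, mul_pos hb hb]
      nlinarith [h1, hDx, hD0, hN0, ha0, norm_nonneg x, sq_nonneg D,
        mul_self_le_mul_self (norm_nonneg x) hDx]
  refine ⟨(D ^ 2 * N + 1)⁻¹, by positivity, ?_⟩
  intro u hu
  have h1 := hkey ⟨u, hu⟩
  have h2 : (⟪(⟨u, hu⟩ : K1), A ⟨u, hu⟩⟫).re = (⟪u, M u⟫).re := by rw [hAr]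
  have h3 : ‖(⟨u, hu⟩ : K1)‖ = ‖u‖ := rfl
  rw [h2, h3] at h1
  have hpos' : (0:ℝ) < D ^ 2 * N + 1 := by positivity
  calc (D ^ 2 * N + 1)⁻¹ * ‖u‖ ^ 2 ≤ (D ^ 2 * N + 1)⁻¹ * ((D ^ 2 * N + 1) * (⟪u, M u⟫).re) := by
        apply mul_le_mul_of_nonneg_left h1 (by positivity)
    _ = (⟪u, M u⟫).re := by field_simp

/-- **Positivity, strict positivity and uniform positivity coincide on Krein subspaces**
(Proposition A.5). -/
theorem kreinSubspace_positive_iff_strict_iff_uniform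
    (M : H →L[ℂ] H) (hM : IsSelfAdjoint M) (hMunit : IsUnit M)
    (K1 : Submodule ℂ H) (hK1 : IsKreinSubspace M K1) :
    ((∀ u ∈ K1, 0 ≤ (⟪u, M u⟫).re) ↔ (∀ u ∈ K1, u ≠ 0 → 0 < (⟪u, M u⟫).re)) ∧
    ((∀ u ∈ K1, u ≠ 0 → 0 < (⟪u, M u⟫).re) ↔
      ∃ c : ℝ, 0 < c ∧ ∀ u ∈ K1, c * ‖u‖ ^ 2 ≤ (⟪u, M u⟫).re) := by
  have hsp : (∀ u ∈ K1, u ≠ 0 → 0 < (⟪u, M u⟫).re) → ∀ u ∈ K1, 0 ≤ (⟪u, M u⟫).re := by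
    intro h u hu
    rcases eq_or_ne u 0 with rfl | h0
    · simp
    · exact (h u hu h0).le
  have hunif : (∃ c : ℝ, 0 < c ∧ ∀ u ∈ K1, c * ‖u‖ ^ 2 ≤ (⟪u, M u⟫).re) →
      ∀ u ∈ K1, u ≠ 0 → 0 < (⟪u, M u⟫).re := by
    rintro ⟨c, hc, hcb⟩ u hu h0
    have h1 : 0 < c * ‖u‖ ^ 2 :=
      mul_pos hc (pow_pos (norm_pos_iff.mpr h0) 2)
    exact h1.trans_le (hcb u hu)
  refine ⟨⟨fun h => hunif (krein_key M hM K1 hK1 h), hsp⟩,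
    ⟨fun h => krein_key M hM K1 hK1 (hsp h), hunif⟩⟩
end
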